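/- arXiv:2103.02576 — 7 statements merged into one kernel-verified Lean document; each statement's English description precedes it below -/
import Mathlib

section
/- Fix an integer d ≥ 1, real numbers c_1 < c_2 < ⋯ < c_d < a_{d+1} < 0, and δ > 0. Then there exists ε₀ > 0 such that for all real parameters a_j, b_j with (a_j + b_j)/2 = c_j, b_j < a_j, and a_j − b_j ≤ ε₀ for all j (so that condition (★) holds), every z ∈ ℂ with Im z ≠ 0 and Im(N(z)·conj(D(z))) = 0 satisfies |z − c_j| < δ for some 1 ≤ j ≤ d; that is, the non-real part of the preimage γ̃^{−1}(ℝP¹) is contained in the union of the discs of radius δ centered at the points c_j. -/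
open scoped BigOperators
open Complex

/-- `p(z) = (z - a_{d+1}) · ∏_{j=1}^{d} (z - a_j)` as a function on `ℂ`,
where `A` plays the role of `a_{d+1}`. -/
noncomputable def pC (d : ℕ) (A : ℝ) (a : Fin d → ℝ) : ℂ → ℂ :=
  fun z => (z - (A : ℂ)) * ∏ j, (z - (a j : ℂ))

/-- `q(z) = ∏_{j=1}^{d} (z - b_j)` as a function on `ℂ`. -/
noncomputable def qC (d : ℕ) (b : Fin d → ℝ) : ℂ → ℂ :=
  fun z => ∏ j, (z - (b j : ℂ))

/-- The numerator `N(z) = z (q'(z) p(z) - p'(z) q(z))` of `γ̃`. -/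
noncomputable def NC (d : ℕ) (A : ℝ) (a b : Fin d → ℝ) : ℂ → ℂ :=
  fun z => z * (deriv (qC d b) z * pC d A a z - deriv (pC d A a) z * qC d b z)

/-- The denominator `D(z) = p(z) q(z)` of `γ̃`. -/
noncomputable def DC (d : ℕ) (A : ℝ) (a b : Fin d → ℝ) : ℂ → ℂ :=
  fun z => pC d A a z * qC d b z

set_option maxHeartbeats 1000000

lemma aux_ne {z : ℂ} (hz : z.im ≠ 0) (w : ℝ) : z - (w : ℂ) ≠ 0 := by
  intro h; apply hz
  have h2 := congrArg Complex.im h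
  simpa using h2

lemma nsq_sub_real (z : ℂ) (w : ℝ) :
    Complex.normSq (z - (w : ℂ)) = (z.re - w)^2 + z.im^2 := by
  rw [Complex.normSq_apply]
  simp only [Complex.sub_re, Complex.sub_im, Complex.ofReal_re, Complex.ofReal_im, sub_zero]
  ring

lemma nsq_pos {z : ℂ} (hz : z.im ≠ 0) (w : ℝ) : 0 < Complex.normSq (z - (w : ℂ)) := by
  rw [nsq_sub_real]
  have : 0 < z.im^2 := by positivity
  nlinarith [sq_nonneg (z.re - w)]
lemma deriv_prod_fin {d : ℕ} (v : Fin d → ℝ) {z : ℂ} (hz : z.im ≠ 0) :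
    deriv (fun w => ∏ j, (w - (v j : ℂ))) z
      = (∏ j, (z - (v j : ℂ))) * ∑ j, (z - (v j : ℂ))⁻¹ := by
  have hne : ∀ j : Fin d, z - (v j : ℂ) ≠ 0 := fun j => aux_ne hz (v j)
  have hdiff : ∀ j : Fin d, DifferentiableAt ℂ (fun w : ℂ => w - (v j : ℂ)) z :=
    fun j => (differentiable_id.sub_const _).differentiableAt
  have hld := logDeriv_prod (s := Finset.univ) (f := fun (j : Fin d) (w : ℂ) => w - (v j : ℂ)) (x := z)
    (fun j _ => hne j) (fun j _ => hdiff j)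
  have h1 : ∀ j : Fin d, logDeriv (fun w : ℂ => w - (v j : ℂ)) z = (z - (v j : ℂ))⁻¹ := by
    intro j
    rw [logDeriv_apply, deriv_sub_const, deriv_id'', one_div]
  simp only [h1] at hld
  have hprodne : (∏ j, (z - (v j : ℂ))) ≠ 0 := Finset.prod_ne_zero_iff.2 fun j _ => hne j
  rw [logDeriv_apply] at hld
  field_simp at hld
  rw [hld]; ring_nf

lemma im_z_inv (z : ℂ) (w : ℝ) :
    (z * (z - (w : ℂ))⁻¹).im = -w * z.im / Complex.normSq (z - (w : ℂ)) := by
  rw [← div_eq_mul_inv, Complex.div_im]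
  simp only [Complex.sub_re, Complex.ofReal_re, Complex.sub_im, Complex.ofReal_im, sub_zero]
  ring

lemma key_identity (d : ℕ) (A : ℝ) (a b : Fin d → ℝ) {z : ℂ} (hz : z.im ≠ 0) :
    (NC d A a b z * (starRingEnd ℂ) (DC d A a b z)).im
      = Complex.normSq (DC d A a b z) * (z.im *
        ((∑ j, a j / Complex.normSq (z - (a j : ℂ)))
          - (∑ j, b j / Complex.normSq (z - (b j : ℂ)))
          + A / Complex.normSq (z - (A : ℂ)))) := by
  have hAne : z - (A : ℂ) ≠ 0 := aux_ne hz A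
  have hane : ∀ j : Fin d, z - (a j : ℂ) ≠ 0 := fun j => aux_ne hz (a j)
  have hbne : ∀ j : Fin d, z - (b j : ℂ) ≠ 0 := fun j => aux_ne hz (b j)
  set P : ℂ := ∏ j, (z - (a j : ℂ)) with hP
  set Qv : ℂ := ∏ j, (z - (b j : ℂ)) with hQ
  set Sa : ℂ := ∑ j, (z - (a j : ℂ))⁻¹
  set Sb : ℂ := ∑ j, (z - (b j : ℂ))⁻¹
  have hq : qC d b z = Qv := rfl
  have hp : pC d A a z = (z - (A : ℂ)) * P := rfl
  have hdq : deriv (qC d b) z = Qv * Sb := by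
    have : qC d b = fun w => ∏ j, (w - (b j : ℂ)) := rfl
    rw [this, deriv_prod_fin b hz]
  have hdP : deriv (fun w : ℂ => ∏ j, (w - (a j : ℂ))) z = P * Sa := deriv_prod_fin a hz
  have hdp : deriv (pC d A a) z = P + (z - (A : ℂ)) * (P * Sa) := by
    have : pC d A a = fun w => (w - (A : ℂ)) * ∏ j, (w - (a j : ℂ)) := rfl
    rw [this]
    rw [deriv_fun_mul (c := fun w : ℂ => w - (A : ℂ)) ((differentiable_id.sub_const _).differentiableAt)
      (DifferentiableAt.fun_finsetProd (u := Finset.univ) (f := fun j (w : ℂ) => w - (a j : ℂ)) fun j _ => (differentiable_id.sub_const _).differentiableAt)]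
    rw [deriv_sub_const, deriv_id'', hdP]
    ring
  set G : ℂ := z * (Sb - Sa - (z - (A : ℂ))⁻¹) with hG
  have hNDG : NC d A a b z = DC d A a b z * G := by
    show z * (deriv (qC d b) z * pC d A a z - deriv (pC d A a) z * qC d b z)
        = (pC d A a z * qC d b z) * G
    rw [hdq, hdp, hp, hq, hG]
    field_simp
    ring
  rw [hNDG, mul_comm (DC d A a b z) G, mul_assoc, Complex.mul_conj]
  rw [Complex.mul_im]
  simp only [Complex.ofReal_re, Complex.ofReal_im, mul_zero, add_zero]
  rw [mul_comm (G.im)]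
  congr 1
  have hGim : G.im = (∑ j, -b j * z.im / Complex.normSq (z - (b j : ℂ)))
      - (∑ j, -a j * z.im / Complex.normSq (z - (a j : ℂ)))
      - (-A * z.im / Complex.normSq (z - (A : ℂ))) := by
    rw [hG, mul_sub, mul_sub, Finset.mul_sum, Finset.mul_sum]
    rw [Complex.sub_im, Complex.sub_im, Complex.im_sum, Complex.im_sum, im_z_inv]
    congr 1
    · congr 1 <;> exact Finset.sum_congr rfl fun j _ => im_z_inv z _
  rw [hGim]
  have e1 : (∑ j, -b j * z.im / Complex.normSq (z - (b j : ℂ)))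
      = z.im * ∑ j, -(b j / Complex.normSq (z - (b j : ℂ))) := by
    rw [Finset.mul_sum]; exact Finset.sum_congr rfl fun j _ => by ring
  have e2 : (∑ j, -a j * z.im / Complex.normSq (z - (a j : ℂ)))
      = z.im * ∑ j, -(a j / Complex.normSq (z - (a j : ℂ))) := by
    rw [Finset.mul_sum]; exact Finset.sum_congr rfl fun j _ => by ring
  rw [e1, e2, Finset.sum_neg_distrib, Finset.sum_neg_distrib]
  ring


lemma pair_id (x y a b : ℝ) (ha : (x-a)^2+y^2 ≠ 0) (hb : (x-b)^2+y^2 ≠ 0) :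
    a/((x-a)^2+y^2) - b/((x-b)^2+y^2)
      = (a-b)*((x^2+y^2) - a*b)/(((x-a)^2+y^2)*((x-b)^2+y^2)) := by
  field_simp
  ring

lemma pair_bound (x y cj M δ' ε₀ e r : ℝ) (hy : y ≠ 0) (hM : |cj| + 1 ≤ M)
    (hδ' : 0 < δ') (hδ'1 : δ' ≤ 1) (he0 : 0 ≤ e) (he : 2*e ≤ ε₀) (hε₀δ : ε₀ ≤ δ')
    (hrδ : δ'^2 ≤ r) (hrR : r ≤ (x - cj)^2 + y^2) :
    (cj + e)/((x-(cj+e))^2 + y^2) - (cj - e)/((x-(cj-e))^2+y^2)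
      ≤ ((32*δ'^2+48*M^2)/δ'^2) * ε₀ / r := by
  obtain ⟨u, rfl⟩ : ∃ u, x = u + cj := ⟨x - cj, by ring⟩
  have hy2 : 0 < y^2 := by positivity
  have hRδ : δ'^2 ≤ u^2 + y^2 := by
    have : u + cj - cj = u := by ring
    rw [this] at hrR
    linarith
  have hrR' : r ≤ u^2 + y^2 := by
    have : u + cj - cj = u := by ring
    rw [this] at hrR
    linarith
  have hr0 : 0 < r := lt_of_lt_of_le (by positivity) hrδ
  have hRj0 : 0 < u^2 + y^2 := by positivity
  have hM1 : 1 ≤ M := by have := abs_nonneg cj; linarith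
  have hcjsq : cj^2 ≤ M^2 := by nlinarith [abs_nonneg cj, _root_.sq_abs cj, abs_nonneg cj]
  have heδ : 2*e ≤ δ' := le_trans he hε₀δ
  have he2 : 4*e^2 ≤ u^2 + y^2 := by nlinarith
  have hε₀0 : 0 ≤ ε₀ := by linarith
  have ea : u + cj - (cj+e) = u - e := by ring
  have eb : u + cj - (cj-e) = u + e := by ring
  rw [ea, eb]
  have hNa0 : 0 < (u-e)^2 + y^2 := by positivity
  have hNb0 : 0 < (u+e)^2 + y^2 := by positivity
  have hNaR : u^2 + y^2 ≤ 4*((u-e)^2 + y^2) := by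
    nlinarith [sq_nonneg (u - 2*e)]
  have hNbR : u^2 + y^2 ≤ 4*((u+e)^2 + y^2) := by
    nlinarith [sq_nonneg (u + 2*e)]
  have hpid : (cj + e)/((u-e)^2+y^2) - (cj - e)/((u+e)^2+y^2)
      = ((cj+e)-(cj-e))*(((u+cj)^2+y^2) - (cj+e)*(cj-e))/((((u+cj)-(cj+e))^2+y^2)*(((u+cj)-(cj-e))^2+y^2)) := by
    have := pair_id (u+cj) y (cj+e) (cj-e) (by rw [ea]; exact ne_of_gt hNa0) (by rw [eb]; exact ne_of_gt hNb0)
    rw [ea, eb] at this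
    rw [this, ea, eb]
  rw [hpid, ea, eb]
  have hnum : ((u+cj)^2+y^2) - (cj+e)*(cj-e) ≤ 2*(u^2+y^2) + 3*M^2 := by
    have he1 : e^2 ≤ 1 := by nlinarith
    nlinarith [sq_nonneg (u - cj)]
  have h1 : ((cj+e)-(cj-e))*(((u+cj)^2+y^2) - (cj+e)*(cj-e)) ≤ ε₀*(2*(u^2+y^2)+3*M^2) := by
    have hab : (cj+e)-(cj-e) = 2*e := by ring
    rw [hab]
    calc 2*e*(((u+cj)^2+y^2) - (cj+e)*(cj-e)) ≤ 2*e*(2*(u^2+y^2)+3*M^2) :=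
          mul_le_mul_of_nonneg_left hnum (by linarith)
      _ ≤ ε₀*(2*(u^2+y^2)+3*M^2) := mul_le_mul_of_nonneg_right he (by positivity)
  have h2 : (u^2+y^2)*(u^2+y^2) ≤ 16*(((u-e)^2+y^2)*((u+e)^2+y^2)) := by nlinarith
  have hrhs : ((32*δ'^2+48*M^2)/δ'^2) * ε₀ / r = (32*δ'^2+48*M^2)*ε₀/(δ'^2*r) := by
    field_simp
  rw [hrhs, div_le_div_iff₀ (by positivity) (by positivity)]
  have hA1 : δ'^2 * r ≤ (u^2+y^2) * (u^2+y^2) :=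
    mul_le_mul hRδ hrR' (le_of_lt hr0) (le_of_lt hRj0)
  have hB : (32*δ'^2+48*M^2)*ε₀*((u^2+y^2)*(u^2+y^2))
      ≤ (32*δ'^2+48*M^2)*ε₀*(16*(((u-e)^2+y^2)*((u+e)^2+y^2))) :=
    mul_le_mul_of_nonneg_left h2 (by positivity)
  have hC : ε₀*((u^2+y^2)*δ'^2)*r ≤ ε₀*((u^2+y^2)*δ'^2)*(u^2+y^2) :=
    mul_le_mul_of_nonneg_left hrR' (by positivity)
  have hD : ε₀*M^2*(δ'^2*r) ≤ ε₀*M^2*((u^2+y^2)*(u^2+y^2)) :=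
    mul_le_mul_of_nonneg_left hA1 (by positivity)
  have hE : (((cj+e)-(cj-e))*(((u+cj)^2+y^2) - (cj+e)*(cj-e)))*(δ'^2*r)
      ≤ (ε₀*(2*(u^2+y^2)+3*M^2))*(δ'^2*r) :=
    mul_le_mul_of_nonneg_right h1 (by positivity)
  nlinarith [hB, hC, hD, hE]


lemma denom_bound (x y c0 A M δ' r : ℝ) (hA : |A| ≤ M) (hc : |c0| ≤ M)
    (hδ' : 0 < δ') (hrδ : δ'^2 ≤ r) (hr : r = (x-c0)^2 + y^2) :
    (x-A)^2 + y^2 ≤ ((2*δ'^2+8*M^2)/δ'^2) * r := by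
  obtain ⟨hA1, hA2⟩ := abs_le.mp hA
  obtain ⟨hc1, hc2⟩ := abs_le.mp hc
  have hq2 : (c0-A)^2 ≤ 4*M^2 := by nlinarith
  have h1 : (x-A)^2 + y^2 ≤ 2*r + 8*M^2 := by
    subst hr
    nlinarith [sq_nonneg ((x-c0) - (c0-A))]
  have h2 : 2*r + 8*M^2 ≤ ((2*δ'^2+8*M^2)/δ'^2) * r := by
    rw [div_mul_eq_mul_div, le_div_iff₀ (by positivity)]
    nlinarith [sq_nonneg M]
  linarith



theorem stmt5 (d : ℕ) (hd : 1 ≤ d) (c : Fin d → ℝ) (A : ℝ)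
    (hc : StrictMono c) (hcA : ∀ j, c j < A) (hA : A < 0) (δ : ℝ) (hδ : 0 < δ) :
    ∃ ε₀ > (0 : ℝ), ∀ a b : Fin d → ℝ,
      (∀ j, (a j + b j) / 2 = c j) → (∀ j, b j < a j) → (∀ j, a j - b j ≤ ε₀) →
      ∀ z : ℂ, z.im ≠ 0 → (NC d A a b z * (starRingEnd ℂ) (DC d A a b z)).im = 0 →
        ∃ j : Fin d, ‖z - (c j : ℂ)‖ < δ := by
  have hδ'0 : 0 < min δ 1 := lt_min hδ one_pos
  set δ' : ℝ := min δ 1 with hδ'def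
  have hδ'1 : δ' ≤ 1 := min_le_right _ _
  have hδ'δ : δ' ≤ δ := min_le_left _ _
  have hne : (Finset.univ : Finset (Fin d)).Nonempty := ⟨⟨0, hd⟩, Finset.mem_univ _⟩
  set S : ℝ := Finset.univ.sup' hne (fun j => |c j|) with hSdef
  set M : ℝ := S + |A| + 1 with hMdef
  have hS0 : 0 ≤ S :=
    le_trans (abs_nonneg (c ⟨0, hd⟩)) (Finset.le_sup' (fun j => |c j|) (Finset.mem_univ ⟨0, hd⟩))
  have hMc : ∀ j, |c j| + 1 ≤ M := by
    intro j
    have h1 : |c j| ≤ S := Finset.le_sup' (fun j => |c j|) (Finset.mem_univ j)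
    have h2 := abs_nonneg A
    rw [hMdef]; linarith
  have hMA : |A| ≤ M := by rw [hMdef]; linarith
  have hM1 : 1 ≤ M := by have := abs_nonneg A; rw [hMdef]; linarith
  set C₁ : ℝ := (32*δ'^2+48*M^2)/δ'^2 with hC₁
  set C₂ : ℝ := (2*δ'^2+8*M^2)/δ'^2 with hC₂
  have hC₁0 : 0 < C₁ := by rw [hC₁]; positivity
  have hC₂0 : 0 < C₂ := by rw [hC₂]; positivity
  have hd0 : (0:ℝ) < (d:ℝ) := by exact_mod_cast Nat.lt_of_lt_of_le Nat.zero_lt_one hd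
  have hA0 : 0 < -A := by linarith
  set ε₀ : ℝ := min δ' ((-A)/(2*(d:ℝ)*C₁*C₂)) with hε₀def
  have hε₀0 : 0 < ε₀ := lt_min hδ'0 (by positivity)
  refine ⟨ε₀, hε₀0, ?_⟩
  intro a b hmid hlt hsmall z hz hIm
  by_contra hcon
  push_neg at hcon
  have hy2 : 0 < z.im^2 := by positivity
  have hRδ : ∀ j, δ'^2 ≤ (z.re - c j)^2 + z.im^2 := by
    intro j
    have h1 : δ' ≤ ‖z - (c j : ℂ)‖ := le_trans hδ'δ (hcon j)
    have h2 : δ'^2 ≤ ‖z - (c j : ℂ)‖^2 := pow_le_pow_left₀ (le_of_lt hδ'0) h1 2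
    rw [Complex.sq_norm, nsq_sub_real] at h2
    exact h2
  obtain ⟨j₀, -, hj₀⟩ :=
    Finset.exists_min_image Finset.univ (fun j => (z.re - c j)^2 + z.im^2) hne
  set r : ℝ := (z.re - c j₀)^2 + z.im^2 with hrdef
  have hrδ : δ'^2 ≤ r := hRδ j₀
  have hr0 : 0 < r := lt_of_lt_of_le (by positivity) hrδ
  have hkey := key_identity d A a b hz
  rw [hIm] at hkey
  have hpne : pC d A a z ≠ 0 :=
    mul_ne_zero (aux_ne hz A) (Finset.prod_ne_zero_iff.2 fun j _ => aux_ne hz (a j))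
  have hqne : qC d b z ≠ 0 := Finset.prod_ne_zero_iff.2 fun j _ => aux_ne hz (b j)
  have hDne : DC d A a b z ≠ 0 := mul_ne_zero hpne hqne
  have hnsD : Complex.normSq (DC d A a b z) ≠ 0 := fun h => hDne (Complex.normSq_eq_zero.mp h)
  have hF0 : (∑ j, a j / Complex.normSq (z - (a j : ℂ)))
      - (∑ j, b j / Complex.normSq (z - (b j : ℂ)))
      + A / Complex.normSq (z - (A : ℂ)) = 0 := by
    rcases mul_eq_zero.mp hkey.symm with h | h
    · exact absurd h hnsD
    · rcases mul_eq_zero.mp h with h' | h'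
      · exact absurd h' hz
      · exact h'
  have hterm : ∀ j ∈ (Finset.univ : Finset (Fin d)),
      a j / Complex.normSq (z - (a j : ℂ)) - b j / Complex.normSq (z - (b j : ℂ))
        ≤ C₁ * ε₀ / r := by
    intro j _
    set e : ℝ := (a j - b j)/2 with hedef
    have ha : a j = c j + e := by have := hmid j; rw [hedef]; linarith
    have hb : b j = c j - e := by have := hmid j; rw [hedef]; linarith
    have he0 : 0 ≤ e := by have := hlt j; rw [hedef]; linarith
    have he : 2*e ≤ ε₀ := by have := hsmall j; rw [hedef]; linarith
    simp only [nsq_sub_real]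
    rw [ha, hb]
    have hpb := pair_bound z.re z.im (c j) M δ' ε₀ e r hz (hMc j) hδ'0 hδ'1 he0 he
      (min_le_left _ _) hrδ (hj₀ j (Finset.mem_univ j))
    rw [hC₁]
    exact hpb
  have hsumb : (∑ j, a j / Complex.normSq (z - (a j : ℂ)))
      - (∑ j, b j / Complex.normSq (z - (b j : ℂ))) ≤ (d:ℝ) * (C₁ * ε₀ / r) := by
    rw [← Finset.sum_sub_distrib]
    have h := Finset.sum_le_card_nsmul Finset.univ _ _ hterm
    simpa [Finset.card_univ, nsmul_eq_mul] using h
  have hden : A / Complex.normSq (z - (A : ℂ)) ≤ A / (C₂ * r) := by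
    have hNA : Complex.normSq (z - (A : ℂ)) ≤ C₂ * r := by
      rw [nsq_sub_real, hC₂]
      exact denom_bound z.re z.im (c j₀) A M δ' r hMA (by have := hMc j₀; linarith)
        hδ'0 hrδ hrdef
    have hNA0 : 0 < Complex.normSq (z - (A : ℂ)) := nsq_pos hz A
    have hinv : (C₂*r)⁻¹ ≤ (Complex.normSq (z - (A : ℂ)))⁻¹ := by
      apply inv_anti₀ hNA0 hNA
    rw [div_eq_mul_inv, div_eq_mul_inv]
    exact mul_le_mul_of_nonpos_left hinv (le_of_lt hA)
  have hkey2 : (d:ℝ)*C₁*C₂*ε₀ < -A := by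
    have h1 : ε₀ ≤ (-A)/(2*(d:ℝ)*C₁*C₂) := min_le_right _ _
    have h2 : 0 < 2*(d:ℝ)*C₁*C₂ := by positivity
    rw [le_div_iff₀ h2] at h1
    nlinarith
  have hfin : (d:ℝ) * (C₁ * ε₀ / r) + A/(C₂*r) < 0 := by
    have e1 : (d:ℝ)*(C₁*ε₀/r) = ((d:ℝ)*C₁*ε₀)/r := by ring
    have hlt2 : ((d:ℝ)*C₁*ε₀)/r < (-A)/(C₂*r) := by
      rw [div_lt_div_iff₀ hr0 (by positivity)]
      nlinarith [mul_lt_mul_of_pos_right hkey2 hr0]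
    have e2 : A/(C₂*r) = -((-A)/(C₂*r)) := by rw [neg_div, neg_neg]
    rw [e1, e2]; linarith
  linarith [hF0, hsumb, hden, hfin]
end

section
/- Fix an integer d ≥ 1 and real parameters b_1 < a_1 < b_2 < a_2 < ⋯ < b_d < a_d < a_{d+1} < 0 (condition (★)). Then there exists λ₀ > 0 such that for every real λ with |λ| ≤ λ₀, the set S_h = {∞} ∪ {z ∈ ℂ : Im(N_h(z)·conj(D_h(z))) = 0} ⊆ OnePoint ℂ is connected; equivalently, the Log-critical locus of the curve {h = 0} is connected. -/
open scoped BigOperators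
open Complex
open Finset
set_option linter.unusedSectionVars false

section Abs

variable {ι : Type*} [Fintype ι] [DecidableEq ι] {r σ : ι → ℝ}

noncomputable def mfun (r : ι → ℝ) (k : ι) (x v : ℝ) : ℝ := (x - r k) ^ 2 + v ^ 2

noncomputable def Mfun (r : ι → ℝ) (k : ι) (x v : ℝ) : ℝ :=
  ∏ l ∈ Finset.univ.erase k, mfun r l x v

noncomputable def Mfun' (r : ι → ℝ) (k : ι) (x v : ℝ) : ℝ :=
  ∑ l ∈ Finset.univ.erase k, (∏ j ∈ (Finset.univ.erase k).erase l, mfun r j x v) * (2 * v)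

noncomputable def gfun (r σ : ι → ℝ) (lam x v : ℝ) : ℝ :=
  v * ∑ k, σ k * r k * Mfun r k x v + lam * ∑ k, σ k * (x - r k) * Mfun r k x v

lemma mfun_nonneg (r : ι → ℝ) (k : ι) (x v : ℝ) : 0 ≤ mfun r k x v :=
  add_nonneg (sq_nonneg _) (sq_nonneg _)

lemma Mfun_nonneg (r : ι → ℝ) (k : ι) (x v : ℝ) : 0 ≤ Mfun r k x v :=
  Finset.prod_nonneg fun l _ => mfun_nonneg r l x v

lemma sq_pos_of_ne {c : ℝ} (h : c ≠ 0) : 0 < c ^ 2 :=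
  (sq_nonneg c).lt_of_ne (Ne.symm (pow_ne_zero 2 h))

lemma exists_Mfun_pos [Nonempty ι] (hr : Function.Injective r) (x v : ℝ) :
    ∃ k, 0 < Mfun r k x v := by
  by_cases h : ∃ k, mfun r k x v = 0
  · obtain ⟨k, hk⟩ := h
    unfold mfun at hk
    have hx2 : (x - r k) ^ 2 = 0 ∧ v ^ 2 = 0 := by
      constructor <;> nlinarith [sq_nonneg (x - r k), sq_nonneg v]
    have hx : x = r k := by
      have := pow_eq_zero_iff (n := 2) (by norm_num) |>.mp hx2.1
      linarith
    refine ⟨k, Finset.prod_pos fun l hl => ?_⟩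
    have hlk : l ≠ k := (Finset.mem_erase.mp hl).1
    have : x - r l ≠ 0 := by
      rw [hx]
      exact sub_ne_zero.mpr fun hc => hlk (hr hc.symm)
    unfold mfun
    have := sq_pos_of_ne this
    nlinarith [sq_nonneg v]
  · push_neg at h
    obtain ⟨k⟩ := ‹Nonempty ι›
    refine ⟨k, Finset.prod_pos fun l _ => ?_⟩
    exact (mfun_nonneg r l x v).lt_of_ne (Ne.symm (h l))

lemma sum_Mfun_pos [Nonempty ι] (hr : Function.Injective r) (x v : ℝ) :
    0 < ∑ k, Mfun r k x v := by
  obtain ⟨k, hk⟩ := exists_Mfun_pos hr x v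
  exact Finset.sum_pos' (fun l _ => Mfun_nonneg r l x v) ⟨k, Finset.mem_univ k, hk⟩

lemma hasDerivAt_Mfun (r : ι → ℝ) (k : ι) (x v : ℝ) :
    HasDerivAt (fun v => Mfun r k x v) (Mfun' r k x v) v := by
  have h : ∀ l ∈ Finset.univ.erase k, HasDerivAt (fun v => mfun r l x v) (2 * v) v := by
    intro l _
    have h2 : HasDerivAt (fun v : ℝ => v ^ 2) (2 * v) v := by
      simpa using hasDerivAt_pow 2 v
    simpa [mfun] using h2.const_add ((x - r l) ^ 2)
  have := HasDerivAt.fun_finsetProd h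
  simpa [Mfun, Mfun', smul_eq_mul] using this

lemma hasDerivAt_gfun (r σ : ι → ℝ) (lam x v : ℝ) :
    HasDerivAt (fun v => gfun r σ lam x v)
      ((∑ k, σ k * r k * Mfun r k x v) + v * (∑ k, σ k * r k * Mfun' r k x v)
        + lam * ∑ k, σ k * (x - r k) * Mfun' r k x v) v := by
  have h1 : HasDerivAt (fun v => ∑ k, σ k * r k * Mfun r k x v)
      (∑ k, σ k * r k * Mfun' r k x v) v :=
    HasDerivAt.fun_sum fun k _ => (hasDerivAt_Mfun r k x v).const_mul _
  have h2 : HasDerivAt (fun v => ∑ k, σ k * (x - r k) * Mfun r k x v)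
      (∑ k, σ k * (x - r k) * Mfun' r k x v) v :=
    HasDerivAt.fun_sum fun k _ => (hasDerivAt_Mfun r k x v).const_mul _
  have := ((hasDerivAt_id v).fun_mul h1).fun_add (h2.const_mul lam)
  simpa [gfun, one_mul, add_assoc] using this


lemma pair_bound_s7 {k l : ι} (hr : Function.Injective r) (hl : l ∈ Finset.univ.erase k)
    (x v : ℝ) :
    2 * |x - r k| * |v| * (∏ j ∈ (Finset.univ.erase k).erase l, mfun r j x v)
      ≤ Mfun r l x v + Mfun r k x v := by
  have hlk : l ≠ k := (Finset.mem_erase.mp hl).1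
  have hmk : mfun r l x v * (∏ j ∈ (Finset.univ.erase k).erase l, mfun r j x v)
      = Mfun r k x v := by
    unfold Mfun
    exact Finset.mul_prod_erase (Finset.univ.erase k) (fun j => mfun r j x v) hl
  have hml : mfun r k x v * (∏ j ∈ (Finset.univ.erase k).erase l, mfun r j x v)
      = Mfun r l x v := by
    unfold Mfun
    rw [Finset.erase_right_comm]
    exact Finset.mul_prod_erase (Finset.univ.erase l) (fun j => mfun r j x v)
      (Finset.mem_erase.mpr ⟨hlk.symm, Finset.mem_univ k⟩)
  set P2 := ∏ j ∈ (Finset.univ.erase k).erase l, mfun r j x v with hP2def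
  have hP2 : 0 ≤ P2 := Finset.prod_nonneg fun j _ => mfun_nonneg r j x v
  have h2ab : 2 * |x - r k| * |v| ≤ (x - r k) ^ 2 + v ^ 2 := by
    have := two_mul_le_add_sq |x - r k| |v|
    simpa [_root_.sq_abs] using this
  have hle : ((x - r k) ^ 2 + v ^ 2) * P2 ≤ mfun r k x v * P2 + mfun r l x v * P2 := by
    have h1 : (x - r k) ^ 2 ≤ mfun r k x v := by unfold mfun; nlinarith [sq_nonneg v]
    have h2 : v ^ 2 ≤ mfun r l x v := by unfold mfun; nlinarith [sq_nonneg (x - r l)]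
    nlinarith [mul_le_mul_of_nonneg_right h1 hP2, mul_le_mul_of_nonneg_right h2 hP2]
  calc 2 * |x - r k| * |v| * P2 ≤ ((x - r k) ^ 2 + v ^ 2) * P2 :=
        mul_le_mul_of_nonneg_right h2ab hP2
    _ ≤ mfun r k x v * P2 + mfun r l x v * P2 := hle
    _ = Mfun r l x v + Mfun r k x v := by rw [hml, hmk]

lemma hT_bound (hσ : ∀ k, σ k = 1 ∨ σ k = -1) (hr : Function.Injective r) (x v : ℝ) :
    |∑ k, σ k * (x - r k) * Mfun' r k x v|
      ≤ 2 * (Fintype.card ι : ℝ) * ∑ k, Mfun r k x v := by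
  have habs : ∀ k : ι, |σ k| = 1 := by
    intro k; rcases hσ k with h | h <;> simp [h]
  calc |∑ k, σ k * (x - r k) * Mfun' r k x v|
      ≤ ∑ k, |σ k * (x - r k) * Mfun' r k x v| := Finset.abs_sum_le_sum_abs _ _
    _ ≤ ∑ k : ι, ((∑ l, Mfun r l x v) + (Fintype.card ι : ℝ) * Mfun r k x v) := by
        apply Finset.sum_le_sum
        intro k _
        have hMk : |σ k * (x - r k) * Mfun' r k x v| = |x - r k| * |Mfun' r k x v| := by
          rw [abs_mul, abs_mul, habs k, one_mul]
        rw [hMk]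
        have step1 : |Mfun' r k x v| ≤
            ∑ l ∈ Finset.univ.erase k,
              (∏ j ∈ (Finset.univ.erase k).erase l, mfun r j x v) * (2 * |v|) := by
          refine (Finset.abs_sum_le_sum_abs _ _).trans (Finset.sum_le_sum fun l _ => ?_)
          rw [abs_mul, _root_.abs_of_nonneg (Finset.prod_nonneg fun j _ => mfun_nonneg r j x v),
            abs_mul, _root_.abs_two]
        have step2 : |x - r k| * |Mfun' r k x v| ≤
            ∑ l ∈ Finset.univ.erase k, (Mfun r l x v + Mfun r k x v) := by
          calc |x - r k| * |Mfun' r k x v|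
              ≤ |x - r k| * ∑ l ∈ Finset.univ.erase k,
                  (∏ j ∈ (Finset.univ.erase k).erase l, mfun r j x v) * (2 * |v|) :=
                mul_le_mul_of_nonneg_left step1 (abs_nonneg _)
            _ = ∑ l ∈ Finset.univ.erase k,
                  2 * |x - r k| * |v| * ∏ j ∈ (Finset.univ.erase k).erase l, mfun r j x v := by
                rw [Finset.mul_sum]; exact Finset.sum_congr rfl fun l _ => by ring
            _ ≤ ∑ l ∈ Finset.univ.erase k, (Mfun r l x v + Mfun r k x v) :=
                Finset.sum_le_sum fun l hl => pair_bound_s7 hr hl x v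
        refine step2.trans ?_
        rw [Finset.sum_add_distrib, Finset.sum_const, nsmul_eq_mul]
        refine add_le_add (Finset.sum_le_sum_of_subset_of_nonneg (Finset.erase_subset _ _)
            fun l _ _ => Mfun_nonneg r l x v)
          (mul_le_mul_of_nonneg_right ?_ (Mfun_nonneg r k x v))
        have hcard := Finset.card_erase_le (a := k) (s := (Finset.univ : Finset ι))
        calc ((Finset.univ.erase k).card : ℝ)
            ≤ ((Finset.univ : Finset ι).card : ℝ) := Nat.cast_le.2 hcard
          _ = (Fintype.card ι : ℝ) := by rw [Finset.card_univ]
    _ = 2 * (Fintype.card ι : ℝ) * ∑ k, Mfun r k x v := by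
        rw [Finset.sum_add_distrib, Finset.sum_const, Finset.card_univ, nsmul_eq_mul,
          ← Finset.mul_sum]
        ring


lemma SM_pos [Nonempty ι] (ht : ∀ k, 0 < σ k * r k) (hr : Function.Injective r) (x v : ℝ) :
    0 < ∑ k, σ k * r k * Mfun r k x v := by
  obtain ⟨k₀, hk₀⟩ := exists_Mfun_pos hr x v
  exact Finset.sum_pos' (fun k _ => mul_nonneg (ht k).le (Mfun_nonneg r k x v))
    ⟨k₀, Finset.mem_univ k₀, mul_pos (ht k₀) hk₀⟩

lemma SM_ge {lam : ℝ} (hlam : ∀ k, 4 * (Fintype.card ι : ℝ) * |lam| ≤ σ k * r k) (x v : ℝ) :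
    4 * (Fintype.card ι : ℝ) * |lam| * (∑ k, Mfun r k x v)
      ≤ ∑ k, σ k * r k * Mfun r k x v := by
  rw [Finset.mul_sum]
  exact Finset.sum_le_sum fun k _ => mul_le_mul_of_nonneg_right (hlam k) (Mfun_nonneg r k x v)

lemma gderiv_pos [Nonempty ι] (hσ : ∀ k, σ k = 1 ∨ σ k = -1) (ht : ∀ k, 0 < σ k * r k)
    (hr : Function.Injective r) {lam : ℝ}
    (hlam : ∀ k, 4 * (Fintype.card ι : ℝ) * |lam| ≤ σ k * r k) (x v : ℝ) :
    0 < (∑ k, σ k * r k * Mfun r k x v) + v * (∑ k, σ k * r k * Mfun' r k x v)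
      + lam * ∑ k, σ k * (x - r k) * Mfun' r k x v := by
  have hSMpos := SM_pos ht hr x v
  have h1 := SM_ge hlam x v
  have h2 : 0 ≤ v * ∑ k, σ k * r k * Mfun' r k x v := by
    rw [Finset.mul_sum]
    refine Finset.sum_nonneg fun k _ => ?_
    have hv : 0 ≤ v * Mfun' r k x v := by
      unfold Mfun'
      rw [Finset.mul_sum]
      refine Finset.sum_nonneg fun l _ => ?_
      have hP2 : 0 ≤ ∏ j ∈ (Finset.univ.erase k).erase l, mfun r j x v :=
        Finset.prod_nonneg fun j _ => mfun_nonneg r j x v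
      calc (0:ℝ) ≤ 2 * ((∏ j ∈ (Finset.univ.erase k).erase l, mfun r j x v) * v ^ 2) :=
            mul_nonneg (by norm_num) (mul_nonneg hP2 (sq_nonneg v))
        _ = v * ((∏ j ∈ (Finset.univ.erase k).erase l, mfun r j x v) * (2 * v)) := by ring
    calc (0:ℝ) ≤ (σ k * r k) * (v * Mfun' r k x v) := mul_nonneg (ht k).le hv
      _ = v * (σ k * r k * Mfun' r k x v) := by ring
  have h3 : |lam * ∑ k, σ k * (x - r k) * Mfun' r k x v|
      ≤ (1/2) * ∑ k, σ k * r k * Mfun r k x v := by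
    rw [abs_mul]
    calc |lam| * |∑ k, σ k * (x - r k) * Mfun' r k x v|
        ≤ |lam| * (2 * (Fintype.card ι : ℝ) * ∑ k, Mfun r k x v) :=
          mul_le_mul_of_nonneg_left (hT_bound hσ hr x v) (abs_nonneg lam)
      _ = (1/2) * (4 * (Fintype.card ι : ℝ) * |lam| * ∑ k, Mfun r k x v) := by ring
      _ ≤ (1/2) * ∑ k, σ k * r k * Mfun r k x v := by linarith
  have h4 := neg_abs_le (lam * ∑ k, σ k * (x - r k) * Mfun' r k x v)
  linarith

lemma gfun_strictMono [Nonempty ι] (hσ : ∀ k, σ k = 1 ∨ σ k = -1)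
    (ht : ∀ k, 0 < σ k * r k) (hr : Function.Injective r) {lam : ℝ}
    (hlam : ∀ k, 4 * (Fintype.card ι : ℝ) * |lam| ≤ σ k * r k) (x : ℝ) :
    StrictMono (fun v => gfun r σ lam x v) :=
  strictMono_of_deriv_pos fun v => by
    rw [(hasDerivAt_gfun r σ lam x v).deriv]
    exact gderiv_pos hσ ht hr hlam x v

lemma continuous_gfun_v (r σ : ι → ℝ) (lam x : ℝ) : Continuous fun v => gfun r σ lam x v :=
  continuous_iff_continuousAt.2 fun v =>
    (hasDerivAt_gfun r σ lam x v).differentiableAt.continuousAt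

lemma continuous_gfun_x (r σ : ι → ℝ) (lam v : ℝ) : Continuous fun x => gfun r σ lam x v := by
  have hm : ∀ l : ι, Continuous fun x => mfun r l x v := fun l => by
    unfold mfun
    exact ((continuous_id.sub continuous_const).pow 2).add continuous_const
  have hM : ∀ k : ι, Continuous fun x => Mfun r k x v := fun k =>
    continuous_finset_prod _ fun l _ => hm l
  unfold gfun
  exact (continuous_const.mul (continuous_finset_sum _ fun k _ =>
      continuous_const.mul (hM k))).add
    (continuous_const.mul (continuous_finset_sum _ fun k _ =>
      (continuous_const.mul (continuous_id.sub continuous_const)).mul (hM k)))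

lemma gfun_exists_zero [Nonempty ι] (hσ : ∀ k, σ k = 1 ∨ σ k = -1)
    (ht : ∀ k, 0 < σ k * r k) (hr : Function.Injective r) {lam : ℝ}
    (hlam : ∀ k, 4 * (Fintype.card ι : ℝ) * |lam| ≤ σ k * r k) (x : ℝ) :
    ∃ v, gfun r σ lam x v = 0 := by
  have habs : ∀ k : ι, |σ k| = 1 := by
    intro k; rcases hσ k with h | h <;> simp [h]
  obtain ⟨n, hn⟩ : ∃ n : ℝ, n = (Fintype.card ι : ℝ) := ⟨_, rfl⟩
  have hnpos : (0:ℝ) < n := by rw [hn]; exact_mod_cast Fintype.card_pos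
  obtain ⟨C, hC⟩ : ∃ C : ℝ, C = ∑ k, |x - r k| := ⟨_, rfl⟩
  have hCnn : 0 ≤ C := hC ▸ Finset.sum_nonneg fun k _ => abs_nonneg _
  obtain ⟨V, hV⟩ : ∃ V : ℝ, V = C / (4 * n) + 1 := ⟨_, rfl⟩
  have hVpos : 0 < V := by rw [hV]; positivity
  have hTbd : ∀ v : ℝ, |∑ k, σ k * (x - r k) * Mfun r k x v| ≤ C * ∑ k, Mfun r k x v := by
    intro v
    calc |∑ k, σ k * (x - r k) * Mfun r k x v|
        ≤ ∑ k, |σ k * (x - r k) * Mfun r k x v| := Finset.abs_sum_le_sum_abs _ _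
      _ ≤ ∑ k, C * Mfun r k x v := by
          refine Finset.sum_le_sum fun k _ => ?_
          rw [abs_mul, abs_mul, habs k, one_mul, _root_.abs_of_nonneg (Mfun_nonneg r k x v)]
          refine mul_le_mul_of_nonneg_right ?_ (Mfun_nonneg r k x v)
          rw [hC]
          exact Finset.single_le_sum (f := fun k => |x - r k|) (fun k _ => abs_nonneg _)
            (Finset.mem_univ k)
      _ = C * ∑ k, Mfun r k x v := by rw [hC, ← Finset.mul_sum]
  have key : ∀ v : ℝ, V ≤ v → 0 < gfun r σ lam x v ∧ gfun r σ lam x (-v) < 0 := by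
    intro v hv
    have hv0 : 0 < v := lt_of_lt_of_le hVpos hv
    constructor
    · have hSM := SM_pos ht hr x v
      have h1 := SM_ge hlam x v
      rw [← hn] at h1
      have hT := hTbd v
      have e1 : (C / (4*n)) * (4 * n * |lam| * ∑ k, Mfun r k x v)
          ≤ (C / (4*n)) * ∑ k, σ k * r k * Mfun r k x v :=
        mul_le_mul_of_nonneg_left h1 (by positivity)
      have e2 : (C / (4*n)) * (4 * n * |lam| * ∑ k, Mfun r k x v)
          = |lam| * (C * ∑ k, Mfun r k x v) := by
        field_simp
      have e3 : |lam * ∑ k, σ k * (x - r k) * Mfun r k x v|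
          ≤ |lam| * (C * ∑ k, Mfun r k x v) := by
        rw [abs_mul]
        exact mul_le_mul_of_nonneg_left hT (abs_nonneg _)
      have e4 : V * ∑ k, σ k * r k * Mfun r k x v
          ≤ v * ∑ k, σ k * r k * Mfun r k x v :=
        mul_le_mul_of_nonneg_right hv hSM.le
      have e5 := neg_abs_le (lam * ∑ k, σ k * (x - r k) * Mfun r k x v)
      have e6 : V * ∑ k, σ k * r k * Mfun r k x v
          = (C / (4*n)) * (∑ k, σ k * r k * Mfun r k x v)
            + ∑ k, σ k * r k * Mfun r k x v := by rw [hV]; ring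
      unfold gfun
      linarith [e1, e2, e3, e4, e5, e6, hSM, h1]
    · have hSM := SM_pos ht hr x (-v)
      have h1 := SM_ge hlam x (-v)
      rw [← hn] at h1
      have hT := hTbd (-v)
      have e1 : (C / (4*n)) * (4 * n * |lam| * ∑ k, Mfun r k x (-v))
          ≤ (C / (4*n)) * ∑ k, σ k * r k * Mfun r k x (-v) :=
        mul_le_mul_of_nonneg_left h1 (by positivity)
      have e2 : (C / (4*n)) * (4 * n * |lam| * ∑ k, Mfun r k x (-v))
          = |lam| * (C * ∑ k, Mfun r k x (-v)) := by
        field_simp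
      have e3 : |lam * ∑ k, σ k * (x - r k) * Mfun r k x (-v)|
          ≤ |lam| * (C * ∑ k, Mfun r k x (-v)) := by
        rw [abs_mul]
        exact mul_le_mul_of_nonneg_left hT (abs_nonneg _)
      have e4 : V * ∑ k, σ k * r k * Mfun r k x (-v)
          ≤ v * ∑ k, σ k * r k * Mfun r k x (-v) :=
        mul_le_mul_of_nonneg_right hv hSM.le
      have e5 := le_abs_self (lam * ∑ k, σ k * (x - r k) * Mfun r k x (-v))
      have e6 : V * ∑ k, σ k * r k * Mfun r k x (-v)
          = (C / (4*n)) * (∑ k, σ k * r k * Mfun r k x (-v))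
            + ∑ k, σ k * r k * Mfun r k x (-v) := by rw [hV]; ring
      unfold gfun
      linarith [e1, e2, e3, e4, e5, e6, hSM, h1]
  obtain ⟨hpos, hneg⟩ := key V le_rfl
  have hivt := intermediate_value_Icc (by linarith : -V ≤ V)
    ((continuous_gfun_v r σ lam x).continuousOn)
  have h0 : (0:ℝ) ∈ Set.Icc (gfun r σ lam x (-V)) (gfun r σ lam x V) := ⟨hneg.le, hpos.le⟩
  obtain ⟨v, _, hv⟩ := hivt h0
  exact ⟨v, hv⟩


theorem abstract_connected [Nonempty ι] (r σ : ι → ℝ) (hσ : ∀ k, σ k = 1 ∨ σ k = -1)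
    (ht : ∀ k, 0 < σ k * r k) (hr : Function.Injective r) :
    ∃ lam₀ > (0:ℝ), ∀ lam : ℝ, |lam| ≤ lam₀ →
      IsConnected ({OnePoint.infty} ∪ ((fun z : ℂ => (z : OnePoint ℂ)) ''
        {z : ℂ | gfun r σ lam z.re (z.im + lam) = 0})) := by
  have hnpos : (0:ℝ) < (Fintype.card ι : ℝ) := by exact_mod_cast Fintype.card_pos
  have huniv : (Finset.univ : Finset ι).Nonempty := Finset.univ_nonempty
  have htminpos : 0 < Finset.univ.inf' huniv (fun k => σ k * r k) := by
    rw [Finset.lt_inf'_iff]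
    exact fun k _ => ht k
  refine ⟨Finset.univ.inf' huniv (fun k => σ k * r k) / (4 * (Fintype.card ι : ℝ)),
    by positivity, fun lam hlam => ?_⟩
  have hlam' : ∀ k, 4 * (Fintype.card ι : ℝ) * |lam| ≤ σ k * r k := by
    intro k
    have h2 : Finset.univ.inf' huniv (fun k => σ k * r k) ≤ σ k * r k :=
      Finset.inf'_le _ (Finset.mem_univ k)
    have h3 := (le_div_iff₀ (by positivity : (0:ℝ) < 4 * (Fintype.card ι : ℝ))).mp hlam
    linarith
  have hmono : ∀ x, StrictMono (gfun r σ lam x) :=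
    fun x => gfun_strictMono hσ ht hr hlam' x
  have hex : ∀ x : ℝ, ∃ v, gfun r σ lam x v = 0 :=
    fun x => gfun_exists_zero hσ ht hr hlam' x
  have hzero : ∀ x, gfun r σ lam x ((hex x).choose) = 0 := fun x => (hex x).choose_spec
  obtain ⟨φ, hφ⟩ : ∃ φ : ℝ → ℝ, ∀ x, gfun r σ lam x (φ x) = 0 := ⟨_, hzero⟩
  have huniq : ∀ x w, gfun r σ lam x w = 0 → w = φ x := fun x w h =>
    (hmono x).injective (by rw [h, hφ x])
  have hφcont : Continuous φ := by
    rw [continuous_iff_continuousAt]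
    intro x₀
    refine tendsto_order.2 ⟨fun w hw => ?_, fun w hw => ?_⟩
    · have hneg : gfun r σ lam x₀ w < 0 := by
        have := (hmono x₀) hw
        rwa [hφ x₀] at this
      have hev : ∀ᶠ x in nhds x₀, gfun r σ lam x w < 0 :=
        ((continuous_gfun_x r σ lam w).continuousAt).eventually_lt_const hneg
      refine hev.mono fun x hx => ?_
      by_contra hc
      have := (hmono x).monotone (not_lt.mp hc)
      rw [hφ x] at this
      linarith
    · have hpos : 0 < gfun r σ lam x₀ w := by
        have := (hmono x₀) hw
        rwa [hφ x₀] at this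
      have hev : ∀ᶠ x in nhds x₀, 0 < gfun r σ lam x w :=
        ((continuous_gfun_x r σ lam w).continuousAt).eventually_const_lt hpos
      refine hev.mono fun x hx => ?_
      by_contra hc
      have := (hmono x).monotone (not_lt.mp hc)
      rw [hφ x] at this
      linarith
  obtain ⟨ψ, hψ⟩ : ∃ ψ : ℝ → ℂ, ψ = fun x : ℝ => ((x : ℂ) + ((φ x - lam : ℝ) : ℂ) * Complex.I) :=
    ⟨_, rfl⟩
  have hψre : ∀ x, (ψ x).re = x := by intro x; rw [hψ]; simp
  have hψim : ∀ x, (ψ x).im = φ x - lam := by intro x; rw [hψ]; simp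
  have hψcont : Continuous ψ := by
    rw [hψ]
    exact Complex.continuous_ofReal.add
      ((Complex.continuous_ofReal.comp (hφcont.sub continuous_const)).mul continuous_const)
  have hset : {z : ℂ | gfun r σ lam z.re (z.im + lam) = 0} = Set.range ψ := by
    ext z
    simp only [Set.mem_setOf_eq, Set.mem_range]
    constructor
    · intro hz
      refine ⟨z.re, ?_⟩
      have h1 : z.im + lam = φ z.re := huniq z.re _ hz
      apply Complex.ext
      · rw [hψre]
      · rw [hψim]; linarith
    · rintro ⟨x, rfl⟩
      rw [hψre, hψim, sub_add_cancel]
      exact hφ x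
  have hrange : (fun z : ℂ => (z : OnePoint ℂ)) '' Set.range ψ
      = Set.range fun x : ℝ => ((ψ x : ℂ) : OnePoint ℂ) := by
    rw [← Set.range_comp]
    rfl
  have hconn : IsConnected (Set.range fun x : ℝ => ((ψ x : ℂ) : OnePoint ℂ)) :=
    isConnected_range (OnePoint.continuous_coe.comp hψcont)
  have htend : Filter.Tendsto (fun x : ℝ => ((ψ x : ℂ) : OnePoint ℂ))
      Filter.atTop (nhds OnePoint.infty) := by
    have h1 : Filter.Tendsto ψ Filter.atTop (Bornology.cobounded ℂ) := by
      rw [← tendsto_norm_atTop_iff_cobounded]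
      refine Filter.tendsto_atTop_mono (fun x => ?_) Filter.tendsto_abs_atTop_atTop
      calc |x| = |(ψ x).re| := by rw [hψre]
        _ ≤ ‖ψ x‖ := Complex.abs_re_le_norm _
        _ = ‖ψ x‖ := rfl
    have h2 : Filter.Tendsto ψ Filter.atTop (Filter.coclosedCompact ℂ) := by
      rwa [Filter.coclosedCompact_eq_cocompact, ← Metric.cobounded_eq_cocompact]
    exact OnePoint.tendsto_coe_infty.comp h2
  have hinfty : OnePoint.infty ∈ closure (Set.range fun x : ℝ => ((ψ x : ℂ) : OnePoint ℂ)) :=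
    mem_closure_of_tendsto htend (Filter.Eventually.of_forall fun x => Set.mem_range_self x)
  rw [hset, hrange]
  refine hconn.subset_closure Set.subset_union_right fun p hp => ?_
  rcases hp with hp | hp
  · rw [Set.mem_singleton_iff] at hp
    rw [hp]
    exact hinfty
  · exact subset_closure hp

end Abs




/-- `p_λ(z) = (z - (a_{d+1} - λi)) · ∏_{j=1}^{d} (z - (a_j - λi))`,
where `A` plays the role of `a_{d+1}`. -/
noncomputable def pLam (d : ℕ) (A : ℝ) (a : Fin d → ℝ) (lam : ℝ) : ℂ → ℂ :=
  fun z => (z - ((A : ℂ) - (lam : ℂ) * Complex.I)) *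
    ∏ j, (z - ((a j : ℂ) - (lam : ℂ) * Complex.I))

/-- `q_λ(z) = ∏_{j=1}^{d} (z - (-b_j - λi))`. -/
noncomputable def qLam (d : ℕ) (b : Fin d → ℝ) (lam : ℝ) : ℂ → ℂ :=
  fun z => ∏ j, (z - (-(b j : ℂ) - (lam : ℂ) * Complex.I))

/-- The numerator `N_h(z) = z (q_λ'(z) p_λ(z) - p_λ'(z) q_λ(z))` of `γ̃_h`. -/
noncomputable def Nh (d : ℕ) (A : ℝ) (a b : Fin d → ℝ) (lam : ℝ) : ℂ → ℂ :=
  fun z => z * (deriv (qLam d b lam) z * pLam d A a lam z -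
    deriv (pLam d A a lam) z * qLam d b lam z)

/-- The denominator `D_h(z) = p_λ(z) q_λ(z)` of `γ̃_h`. -/
noncomputable def Dh (d : ℕ) (A : ℝ) (a b : Fin d → ℝ) (lam : ℝ) : ℂ → ℂ :=
  fun z => pLam d A a lam z * qLam d b lam z

section Ident

lemma im_z_conj (z : ℂ) (ρ lam : ℝ) :
    (z * (starRingEnd ℂ) (z - ((ρ : ℂ) - (lam : ℂ) * Complex.I))).im
      = -(lam * z.re + ρ * z.im) := by
  simp [Complex.mul_im, Complex.sub_re, Complex.sub_im, Complex.conj_re, Complex.conj_im,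
    Complex.mul_re, Complex.ofReal_re, Complex.ofReal_im, Complex.I_re, Complex.I_im]
  ring

lemma normSq_e (z : ℂ) (ρ lam : ℝ) :
    Complex.normSq (z - ((ρ : ℂ) - (lam : ℂ) * Complex.I))
      = (z.re - ρ) ^ 2 + (z.im + lam) ^ 2 := by
  simp [Complex.normSq_apply, Complex.sub_re, Complex.sub_im, Complex.mul_re, Complex.mul_im,
    Complex.I_re, Complex.I_im, Complex.ofReal_re, Complex.ofReal_im]
  ring

lemma sum_erase_mul_conj {κ : Type*} [Fintype κ] [DecidableEq κ] (f : κ → ℂ) :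
    (∑ j, ∏ l ∈ Finset.univ.erase j, f l) * (starRingEnd ℂ) (∏ l, f l)
      = ∑ j, (starRingEnd ℂ) (f j)
          * (((∏ l ∈ Finset.univ.erase j, Complex.normSq (f l)) : ℝ) : ℂ) := by
  rw [Finset.sum_mul]
  refine Finset.sum_congr rfl fun j _ => ?_
  rw [map_prod, ← Finset.mul_prod_erase Finset.univ (fun l => (starRingEnd ℂ) (f l))
    (Finset.mem_univ j), Complex.ofReal_prod]
  calc (∏ l ∈ Finset.univ.erase j, f l)
        * ((starRingEnd ℂ) (f j) * ∏ l ∈ Finset.univ.erase j, (starRingEnd ℂ) (f l))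
      = (starRingEnd ℂ) (f j)
          * ∏ l ∈ Finset.univ.erase j, (f l * (starRingEnd ℂ) (f l)) := by
        rw [Finset.prod_mul_distrib]; ring
    _ = _ := by
        congr 1
        exact Finset.prod_congr rfl fun l _ => Complex.mul_conj (f l)

lemma qLam_hasDeriv (d : ℕ) (b : Fin d → ℝ) (lam : ℝ) (z : ℂ) :
    HasDerivAt (qLam d b lam)
      (∑ j, ∏ l ∈ Finset.univ.erase j, (z - (-(b l : ℂ) - (lam : ℂ) * Complex.I))) z := by
  have h := HasDerivAt.fun_finsetProd (u := (Finset.univ : Finset (Fin d)))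
    (f := fun (j : Fin d) (w : ℂ) => w - (-(b j : ℂ) - (lam : ℂ) * Complex.I))
    (f' := fun _ => 1) (x := z) (fun j _ => (hasDerivAt_id z).sub_const _)
  unfold qLam
  simpa [smul_eq_mul] using h

noncomputable def aext (d : ℕ) (a : Fin d → ℝ) (A : ℝ) : Fin (d+1) → ℝ :=
  fun j => if h : (j : ℕ) < d then a ⟨j, h⟩ else A

lemma aext_castSucc (d : ℕ) (a : Fin d → ℝ) (A : ℝ) (j : Fin d) :
    aext d a A (Fin.castSucc j) = a j := by
  simp [aext, j.isLt]

lemma aext_last (d : ℕ) (a : Fin d → ℝ) (A : ℝ) : aext d a A (Fin.last d) = A := by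
  simp [aext]

lemma pLam_eq_prod (d : ℕ) (A : ℝ) (a : Fin d → ℝ) (lam : ℝ) :
    pLam d A a lam = fun z => ∏ j : Fin (d+1),
      (z - (((aext d a A j : ℝ) : ℂ) - (lam : ℂ) * Complex.I)) := by
  funext z
  rw [pLam, Fin.prod_univ_castSucc]
  simp only [aext_castSucc, aext_last]
  ring

lemma pLam_hasDeriv (d : ℕ) (A : ℝ) (a : Fin d → ℝ) (lam : ℝ) (z : ℂ) :
    HasDerivAt (pLam d A a lam)
      (∑ j : Fin (d+1), ∏ l ∈ Finset.univ.erase j,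
        (z - (((aext d a A l : ℝ) : ℂ) - (lam : ℂ) * Complex.I))) z := by
  rw [pLam_eq_prod]
  have h := HasDerivAt.fun_finsetProd (u := (Finset.univ : Finset (Fin (d+1))))
    (f := fun (j : Fin (d+1)) (w : ℂ) => w - (((aext d a A j : ℝ) : ℂ) - (lam : ℂ) * Complex.I))
    (f' := fun _ => 1) (x := z) (fun j _ => (hasDerivAt_id z).sub_const _)
  simpa [smul_eq_mul] using h

lemma erase_inl (d e : ℕ) (j : Fin d) :
    (Finset.univ : Finset (Fin d ⊕ Fin e)).erase (Sum.inl j)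
      = (Finset.univ.erase j).disjSum Finset.univ := by
  ext k
  cases k with
  | inl i => simp [Finset.mem_erase]
  | inr i => simp

lemma erase_inr (d e : ℕ) (j : Fin e) :
    (Finset.univ : Finset (Fin d ⊕ Fin e)).erase (Sum.inr j)
      = Finset.univ.disjSum (Finset.univ.erase j) := by
  ext k
  cases k with
  | inl i => simp
  | inr i => simp [Finset.mem_erase]


lemma Minl_eq (d : ℕ) (A : ℝ) (a b : Fin d → ℝ) (x v : ℝ) (j : Fin d) :
    Mfun (Sum.elim (fun j => -(b j)) (aext d a A)) (Sum.inl j) x v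
      = (∏ l ∈ Finset.univ.erase j, ((x - (-(b l))) ^ 2 + v ^ 2))
        * ∏ l : Fin (d+1), ((x - aext d a A l) ^ 2 + v ^ 2) := by
  rw [Mfun, erase_inl, Finset.prod_disjSum]
  simp only [mfun, Sum.elim_inl, Sum.elim_inr]

lemma Minr_eq (d : ℕ) (A : ℝ) (a b : Fin d → ℝ) (x v : ℝ) (j : Fin (d+1)) :
    Mfun (Sum.elim (fun j => -(b j)) (aext d a A)) (Sum.inr j) x v
      = (∏ l : Fin d, ((x - (-(b l))) ^ 2 + v ^ 2))
        * ∏ l ∈ Finset.univ.erase j, ((x - aext d a A l) ^ 2 + v ^ 2) := by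
  rw [Mfun, erase_inr, Finset.prod_disjSum]
  simp only [mfun, Sum.elim_inl, Sum.elim_inr]

lemma real_ident (d : ℕ) (A : ℝ) (a b : Fin d → ℝ) (lam x y : ℝ) :
    (∑ j : Fin d, (-(lam * x + (-(b j)) * y))
        * ((∏ l ∈ Finset.univ.erase j, ((x - (-(b l))) ^ 2 + (y + lam) ^ 2))
          * ∏ l : Fin (d+1), ((x - aext d a A l) ^ 2 + (y + lam) ^ 2)))
      - (∑ j : Fin (d+1), (-(lam * x + (aext d a A j) * y))
        * ((∏ l ∈ Finset.univ.erase j, ((x - aext d a A l) ^ 2 + (y + lam) ^ 2))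
          * ∏ l : Fin d, ((x - (-(b l))) ^ 2 + (y + lam) ^ 2)))
      = - gfun (Sum.elim (fun j => -(b j)) (aext d a A))
          (Sum.elim (fun _ => (1:ℝ)) (fun _ => (-1:ℝ))) lam x (y + lam) := by
  rw [gfun, Fintype.sum_sum_type, Fintype.sum_sum_type]
  simp only [Sum.elim_inl, Sum.elim_inr]
  rw [mul_add, mul_add]
  simp only [Finset.mul_sum]
  rw [add_add_add_comm, ← Finset.sum_add_distrib, ← Finset.sum_add_distrib, neg_add,
    sub_eq_add_neg]
  congr 1
  · rw [← Finset.sum_neg_distrib]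
    refine Finset.sum_congr rfl fun j _ => ?_
    rw [Minl_eq d A a b x (y + lam) j]
    ring
  · rw [neg_inj]
    refine Finset.sum_congr rfl fun j _ => ?_
    rw [Minr_eq d A a b x (y + lam) j]
    ring


lemma im_z_conj2 (z c : ℂ) : (z * (starRingEnd ℂ) (z - c)).im = c.im * z.re - c.re * z.im := by
  simp [Complex.mul_im, Complex.mul_re, Complex.sub_re, Complex.sub_im, Complex.conj_re,
    Complex.conj_im]
  ring

lemma normSq_sub2 (z c : ℂ) :
    Complex.normSq (z - c) = (z.re - c.re) ^ 2 + (z.im - c.im) ^ 2 := by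
  simp [Complex.normSq_apply, Complex.sub_re, Complex.sub_im]
  ring

lemma NconjD_eq {κ₁ κ₂ : Type*} [Fintype κ₁] [DecidableEq κ₁] [Fintype κ₂] [DecidableEq κ₂]
    (z : ℂ) (f : κ₁ → ℂ) (g : κ₂ → ℂ) :
    z * ((∑ j, ∏ l ∈ Finset.univ.erase j, f l) * (∏ l, g l)
        - (∑ j, ∏ l ∈ Finset.univ.erase j, g l) * (∏ l, f l))
      * (starRingEnd ℂ) ((∏ l, g l) * (∏ l, f l))
      = (∑ j, (z * (starRingEnd ℂ) (f j))
          * ((((∏ l ∈ Finset.univ.erase j, Complex.normSq (f l))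
              * ∏ l, Complex.normSq (g l)) : ℝ) : ℂ))
        - ∑ j, (z * (starRingEnd ℂ) (g j))
          * ((((∏ l ∈ Finset.univ.erase j, Complex.normSq (g l))
              * ∏ l, Complex.normSq (f l)) : ℝ) : ℂ) := by
  rw [map_mul]
  have e : z * ((∑ j, ∏ l ∈ Finset.univ.erase j, f l) * (∏ l, g l)
        - (∑ j, ∏ l ∈ Finset.univ.erase j, g l) * (∏ l, f l))
      * ((starRingEnd ℂ) (∏ l, g l) * (starRingEnd ℂ) (∏ l, f l))
      = ((∑ j, ∏ l ∈ Finset.univ.erase j, f l) * (starRingEnd ℂ) (∏ l, f l))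
          * (z * ((∏ l, g l) * (starRingEnd ℂ) (∏ l, g l)))
        - ((∑ j, ∏ l ∈ Finset.univ.erase j, g l) * (starRingEnd ℂ) (∏ l, g l))
          * (z * ((∏ l, f l) * (starRingEnd ℂ) (∏ l, f l))) := by ring
  rw [e, sum_erase_mul_conj f, sum_erase_mul_conj g, Complex.mul_conj, Complex.mul_conj,
    map_prod Complex.normSq f Finset.univ, map_prod Complex.normSq g Finset.univ,
    Finset.sum_mul, Finset.sum_mul]
  congr 1 <;> refine Finset.sum_congr rfl fun j _ => ?_ <;> (push_cast; ring)

lemma key_ident (d : ℕ) (A : ℝ) (a b : Fin d → ℝ) (lam : ℝ) (z : ℂ) :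
    (Nh d A a b lam z * (starRingEnd ℂ) (Dh d A a b lam z)).im
      = - gfun (Sum.elim (fun j => -(b j)) (aext d a A))
          (Sum.elim (fun _ => (1:ℝ)) (fun _ => (-1:ℝ))) lam z.re (z.im + lam) := by
  have hQ := (qLam_hasDeriv d b lam z).deriv
  have hP := (pLam_hasDeriv d A a lam z).deriv
  have e := NconjD_eq z (fun l : Fin d => z - (-(b l : ℂ) - (lam : ℂ) * Complex.I))
    (fun l : Fin (d+1) => z - (((aext d a A l : ℝ) : ℂ) - (lam : ℂ) * Complex.I))
  simp only [Nh, Dh]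
  rw [hQ, hP]
  simp only [qLam, pLam_eq_prod]
  rw [e]
  rw [Complex.sub_im, Complex.im_sum, Complex.im_sum]
  rw [← real_ident d A a b lam z.re z.im]
  have hprodQ : ∀ s : Finset (Fin d),
      ∏ l ∈ s, Complex.normSq (z - (-(b l : ℂ) - (lam : ℂ) * Complex.I))
        = ∏ l ∈ s, ((z.re - (-(b l))) ^ 2 + (z.im + lam) ^ 2) := by
    refine fun s => Finset.prod_congr rfl fun l _ => ?_
    rw [normSq_sub2]
    simp only [Complex.sub_re, Complex.sub_im, Complex.neg_re, Complex.neg_im,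
      Complex.mul_re, Complex.mul_im, Complex.I_re, Complex.I_im, Complex.ofReal_re,
      Complex.ofReal_im]
    ring
  have hprodP : ∀ s : Finset (Fin (d+1)),
      ∏ l ∈ s, Complex.normSq (z - (((aext d a A l : ℝ) : ℂ) - (lam : ℂ) * Complex.I))
        = ∏ l ∈ s, ((z.re - aext d a A l) ^ 2 + (z.im + lam) ^ 2) := by
    refine fun s => Finset.prod_congr rfl fun l _ => ?_
    rw [normSq_sub2]
    simp only [Complex.sub_re, Complex.sub_im, Complex.neg_re, Complex.neg_im,
      Complex.mul_re, Complex.mul_im, Complex.I_re, Complex.I_im, Complex.ofReal_re,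
      Complex.ofReal_im]
    ring
  congr 1
  · refine Finset.sum_congr rfl fun j _ => ?_
    simp only [Complex.im_mul_ofReal, im_z_conj2]
    rw [hprodQ (Finset.univ.erase j), hprodP Finset.univ]
    simp only [Complex.sub_re, Complex.sub_im, Complex.neg_re, Complex.neg_im,
      Complex.mul_re, Complex.mul_im, Complex.I_re, Complex.I_im, Complex.ofReal_re,
      Complex.ofReal_im]
    ring
  · refine Finset.sum_congr rfl fun j _ => ?_
    simp only [Complex.im_mul_ofReal, im_z_conj2]
    rw [hprodP (Finset.univ.erase j), hprodQ Finset.univ]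
    simp only [Complex.sub_re, Complex.sub_im, Complex.neg_re, Complex.neg_im,
      Complex.mul_re, Complex.mul_im, Complex.I_re, Complex.I_im, Complex.ofReal_re,
      Complex.ofReal_im]
    ring

end Ident



theorem stmt7 (d : ℕ) (hd : 1 ≤ d) (a b : Fin d → ℝ) (A : ℝ)
    (hba : ∀ j, b j < a j) (hab : ∀ i j : Fin d, i < j → a i < b j)
    (haA : ∀ j, a j < A) (hA : A < 0) :
    ∃ lam₀ > (0 : ℝ), ∀ lam : ℝ, |lam| ≤ lam₀ →
      IsConnected ({OnePoint.infty} ∪ ((fun z : ℂ => (z : OnePoint ℂ)) ''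
        {z : ℂ | (Nh d A a b lam z * (starRingEnd ℂ) (Dh d A a b lam z)).im = 0})) := by
  haveI : Nonempty (Fin d ⊕ Fin (d+1)) := ⟨Sum.inr 0⟩
  have hbneg : ∀ j, b j < (0:ℝ) := fun j => lt_trans (hba j) (lt_trans (haA j) hA)
  have haneg : ∀ j : Fin (d+1), aext d a A j < 0 := by
    intro j
    simp only [aext]
    by_cases h : (j : ℕ) < d
    · rw [dif_pos h]; exact lt_trans (haA _) hA
    · rw [dif_neg h]; exact hA
  have haextlt : ∀ i j : Fin (d+1), i < j → aext d a A i < aext d a A j := by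
    intro i j hij
    have hij' : (i : ℕ) < (j : ℕ) := hij
    simp only [aext]
    by_cases hj : (j : ℕ) < d
    · have hi : (i : ℕ) < d := lt_trans hij' hj
      rw [dif_pos hi, dif_pos hj]
      calc a ⟨(i : ℕ), hi⟩ < b ⟨(j : ℕ), hj⟩ := hab _ _ (Fin.mk_lt_mk.mpr hij')
        _ < a ⟨(j : ℕ), hj⟩ := hba _
    · have hi : (i : ℕ) < d := by
        have h1 := j.isLt
        omega
      rw [dif_pos hi, dif_neg hj]
      exact haA _
  have hblt : ∀ i j : Fin d, i < j → b i < b j := fun i j hij =>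
    lt_trans (hba i) (hab i j hij)
  have hinj : Function.Injective (Sum.elim (fun j => -(b j)) (aext d a A)) := by
    intro k k' h
    match k, k' with
    | Sum.inl i, Sum.inl i' =>
      simp only [Sum.elim_inl] at h
      have hbb : b i = b i' := neg_injective h
      rcases lt_trichotomy i i' with hc | hc | hc
      · exact absurd hbb (ne_of_lt (hblt i i' hc))
      · rw [hc]
      · exact absurd hbb.symm (ne_of_lt (hblt i' i hc))
    | Sum.inl i, Sum.inr j' =>
      exfalso
      simp only [Sum.elim_inl, Sum.elim_inr] at h
      have h1 := hbneg i
      have h2 := haneg j'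
      linarith
    | Sum.inr j, Sum.inl i' =>
      exfalso
      simp only [Sum.elim_inl, Sum.elim_inr] at h
      have h1 := hbneg i'
      have h2 := haneg j
      linarith
    | Sum.inr j, Sum.inr j' =>
      simp only [Sum.elim_inr] at h
      rcases lt_trichotomy j j' with hc | hc | hc
      · exact absurd h (ne_of_lt (haextlt _ _ hc))
      · rw [hc]
      · exact absurd h.symm (ne_of_lt (haextlt _ _ hc))
  have hσ : ∀ k : Fin d ⊕ Fin (d+1),
      Sum.elim (fun _ => (1:ℝ)) (fun _ => (-1:ℝ)) k = 1
        ∨ Sum.elim (fun _ => (1:ℝ)) (fun _ => (-1:ℝ)) k = -1 := by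
    rintro (j | j) <;> simp
  have ht : ∀ k : Fin d ⊕ Fin (d+1),
      0 < Sum.elim (fun _ => (1:ℝ)) (fun _ => (-1:ℝ)) k
        * Sum.elim (fun j => -(b j)) (aext d a A) k := by
    rintro (j | j) <;> simp only [Sum.elim_inl, Sum.elim_inr]
    · have := hbneg j; linarith
    · have := haneg j; nlinarith
  obtain ⟨lam₀, h0, H⟩ := abstract_connected (Sum.elim (fun j => -(b j)) (aext d a A))
    (Sum.elim (fun _ => (1:ℝ)) (fun _ => (-1:ℝ))) hσ ht hinj
  refine ⟨lam₀, h0, fun lam hlam => ?_⟩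
  have hc := H lam hlam
  have hsets : {z : ℂ | (Nh d A a b lam z * (starRingEnd ℂ) (Dh d A a b lam z)).im = 0}
      = {z : ℂ | gfun (Sum.elim (fun j => -(b j)) (aext d a A))
          (Sum.elim (fun _ => (1:ℝ)) (fun _ => (-1:ℝ))) lam z.re (z.im + lam) = 0} := by
    ext z
    simp only [Set.mem_setOf_eq, key_ident d A a b lam z, neg_eq_zero]
  rw [hsets]
  exact hc
end

section
/- Assume hypothesis (H), and assume moreover that Q(w,t) = b·w + d·t^δ + Q̃, where δ ≥ 1 is an integer with 2δ ≤ κ and m = 2δ, d ∈ ℂ, and every monomial w^{j₂}t^{j₃} of Q̃ satisfies both m·j₂ + 2j₃ > m and j₂ + 2j₃ > 2δ. Then the coefficient of the monomial z^{3ℓ−1}·w in Ñ equals ℓ²·b³; and if d ≠ 0, the coefficient of the monomial z^{3ℓ−1}·t^δ in Ñ equals ℓ²·b²·d. In particular Ñ ≠ 0. -/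
open MvPolynomial

/-- The numerator `Ñ = ∂_z f̃ · Γ̃_w − ∂_w f̃ · Γ̃_z` of the equation cutting out the
Log-inflection points on `{f̃ = 0}`, where the variables are `z = X 0`, `w = X 1`, `t = X 2`,
`Γ̃_z = ∂_z(z ∂_z f̃)·(w+1)∂_w f̃ − z ∂_z f̃·∂_z((w+1)∂_w f̃)` and
`Γ̃_w = ∂_w(z ∂_z f̃)·(w+1)∂_w f̃ − z ∂_z f̃·∂_w((w+1)∂_w f̃)`. -/
noncomputable def Ntilde (f : MvPolynomial (Fin 3) ℂ) : MvPolynomial (Fin 3) ℂ :=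
  pderiv 0 f *
      (pderiv 1 (X 0 * pderiv 0 f) * ((X 1 + 1) * pderiv 1 f) -
        (X 0 * pderiv 0 f) * pderiv 1 ((X 1 + 1) * pderiv 1 f)) -
    pderiv 1 f *
      (pderiv 0 (X 0 * pderiv 0 f) * ((X 1 + 1) * pderiv 1 f) -
        (X 0 * pderiv 0 f) * pderiv 0 ((X 1 + 1) * pderiv 1 f))

noncomputable def TT (p q r : MvPolynomial (Fin 3) ℂ) : MvPolynomial (Fin 3) ℂ :=
  pderiv 0 p *
      (pderiv 1 (X 0 * pderiv 0 q) * ((X 1 + 1) * pderiv 1 r) -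
        (X 0 * pderiv 0 q) * pderiv 1 ((X 1 + 1) * pderiv 1 r)) -
    pderiv 1 p *
      (pderiv 0 (X 0 * pderiv 0 q) * ((X 1 + 1) * pderiv 1 r) -
        (X 0 * pderiv 0 q) * pderiv 0 ((X 1 + 1) * pderiv 1 r))

lemma TT_add_left (p p' q r : MvPolynomial (Fin 3) ℂ) :
    TT (p + p') q r = TT p q r + TT p' q r := by
  simp only [TT, map_add]; ring

lemma TT_add_mid (p q q' r : MvPolynomial (Fin 3) ℂ) :
    TT p (q + q') r = TT p q r + TT p q' r := by
  simp only [TT, map_add, mul_add]; ring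

lemma TT_add_right (p q r r' : MvPolynomial (Fin 3) ℂ) :
    TT p q (r + r') = TT p q r + TT p q r' := by
  simp only [TT, map_add, mul_add, add_mul, map_add]; ring

lemma coeff_pderiv (i : Fin 3) (p : MvPolynomial (Fin 3) ℂ) (ν : Fin 3 →₀ ℕ) :
    coeff ν (pderiv i p) = coeff (ν + Finsupp.single i 1) p * ((ν i : ℂ) + 1) := by
  induction p using MvPolynomial.induction_on' with
  | monomial s a =>
    rw [pderiv_monomial, coeff_monomial, coeff_monomial]
    by_cases h : s = ν + Finsupp.single i 1
    · subst h
      have h1 : ν + Finsupp.single i 1 - Finsupp.single i 1 = ν := add_tsub_cancel_right _ _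
      have h2 : ((ν + Finsupp.single i 1 : Fin 3 →₀ ℕ)) i = ν i + 1 := by simp
      rw [if_pos h1, if_pos rfl, h2]
      push_cast; ring
    · rw [if_neg h]
      by_cases h2 : s - Finsupp.single i 1 = ν
      · rw [if_pos h2]
        by_cases h3 : s i = 0
        · simp [h3]
        · exfalso; apply h
          have : ν + Finsupp.single i 1 = s := by
            rw [← h2, tsub_add_cancel_of_le]
            intro j
            rcases eq_or_ne j i with rfl | hij
            · simpa [Finsupp.single_apply] using Nat.one_le_iff_ne_zero.mpr h3
            · simp [Finsupp.single_apply, Ne.symm hij]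
          exact this.symm
      · rw [if_neg h2, zero_mul]
  | add p q hp hq => simp only [map_add, coeff_add, hp, hq]; ring

lemma mem_support_pderiv {i : Fin 3} {p : MvPolynomial (Fin 3) ℂ} {ν : Fin 3 →₀ ℕ}
    (h : ν ∈ (pderiv i p).support) : ν + Finsupp.single i 1 ∈ p.support := by
  rw [MvPolynomial.mem_support_iff] at h ⊢
  intro h0
  rw [coeff_pderiv, h0, zero_mul] at h
  exact h rfl


/-- canonical exponent -/
noncomputable def EE (a b c : ℕ) : Fin 3 →₀ ℕ :=
  Finsupp.single 0 a + Finsupp.single 1 b + Finsupp.single 2 c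

lemma EE_apply0 (a b c : ℕ) : EE a b c 0 = a := by
  simp [EE, Finsupp.single_apply]
lemma EE_apply1 (a b c : ℕ) : EE a b c 1 = b := by
  simp [EE, Finsupp.single_apply]
lemma EE_apply2 (a b c : ℕ) : EE a b c 2 = c := by
  simp [EE, Finsupp.single_apply]

lemma EE_add (a b c a' b' c' : ℕ) : EE a b c + EE a' b' c' = EE (a+a') (b+b') (c+c') := by
  simp only [EE, Finsupp.single_add]; abel

lemma EE_inj {a b c a' b' c' : ℕ} (h : EE a b c = EE a' b' c') : a = a' ∧ b = b' ∧ c = c' := by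
  refine ⟨?_, ?_, ?_⟩
  · have := DFunLike.congr_fun h (0 : Fin 3); rwa [EE_apply0, EE_apply0] at this
  · have := DFunLike.congr_fun h (1 : Fin 3); rwa [EE_apply1, EE_apply1] at this
  · have := DFunLike.congr_fun h (2 : Fin 3); rwa [EE_apply2, EE_apply2] at this

lemma EE_sub0 (a b c : ℕ) : EE a b c - Finsupp.single 0 1 = EE (a-1) b c := by
  ext j
  fin_cases j <;>
    simp [EE, Finsupp.tsub_apply, Finsupp.single_apply, Fin.ext_iff]

lemma EE_sub1 (a b c : ℕ) : EE a b c - Finsupp.single 1 1 = EE a (b-1) c := by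
  ext j
  fin_cases j <;>
    simp [EE, Finsupp.tsub_apply, Finsupp.single_apply, Fin.ext_iff]

lemma pd0_mono (a b c : ℕ) (x : ℂ) :
    pderiv 0 (monomial (EE a b c) x) = monomial (EE (a-1) b c) (x * a) := by
  rw [pderiv_monomial, EE_sub0, EE_apply0]

lemma pd1_mono (a b c : ℕ) (x : ℂ) :
    pderiv 1 (monomial (EE a b c) x) = monomial (EE a (b-1) c) (x * b) := by
  rw [pderiv_monomial, EE_sub1, EE_apply1]

lemma mono_mul (a b c a' b' c' : ℕ) (x y : ℂ) :
    monomial (EE a b c) x * monomial (EE a' b' c') y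
      = monomial (EE (a+a') (b+b') (c+c')) (x*y) := by
  rw [monomial_mul, EE_add]

lemma X_mono (i : Fin 3) : (X i : MvPolynomial (Fin 3) ℂ) = monomial (Finsupp.single i 1) 1 := by
  have h := X_pow_eq_monomial (n := i) (e := 1) (R := ℂ)
  rwa [pow_one] at h

lemma EE100 : EE 1 0 0 = Finsupp.single 0 1 := by simp [EE]
lemma EE010 : EE 0 1 0 = Finsupp.single 1 1 := by simp [EE]
lemma EE000 : EE 0 0 0 = 0 := by simp [EE]

lemma X0_mul_mono (a b c : ℕ) (x : ℂ) :
    (X 0 : MvPolynomial (Fin 3) ℂ) * monomial (EE a b c) x = monomial (EE (a+1) b c) x := by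
  rw [X_mono, ← EE100, mono_mul, one_mul, Nat.add_comm 1 a, Nat.zero_add, Nat.zero_add]

lemma X1_mul_mono (a b c : ℕ) (x : ℂ) :
    (X 1 : MvPolynomial (Fin 3) ℂ) * monomial (EE a b c) x = monomial (EE a (b+1) c) x := by
  rw [X_mono, ← EE010, mono_mul, one_mul, Nat.zero_add, Nat.add_comm 1 b, Nat.zero_add]

lemma coeff_mono (a b c a' b' c' : ℕ) (x : ℂ) :
    coeff (EE a' b' c') (monomial (EE a b c) x)
      = if a = a' ∧ b = b' ∧ c = c' then x else 0 := by
  rw [coeff_monomial]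
  by_cases h : a = a' ∧ b = b' ∧ c = c'
  · obtain ⟨rfl, rfl, rfl⟩ := h; simp
  · rw [if_neg h, if_neg]
    intro he
    exact h (EE_inj he)

lemma coeff_mul3_zero (τ : Fin 3 →₀ ℕ) (A B C : MvPolynomial (Fin 3) ℂ)
    (h : ∀ α ∈ A.support, ∀ β ∈ B.support, ∀ γ ∈ C.support, α + β + γ ≠ τ) :
    coeff τ (A * (B * C)) = 0 := by
  rw [← MvPolynomial.notMem_support_iff]
  intro hmem
  have h1 := MvPolynomial.support_mul A (B * C) hmem
  rw [Finset.mem_add] at h1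
  obtain ⟨α, hα, σ, hσ, hsum⟩ := h1
  have h2 := MvPolynomial.support_mul B C hσ
  rw [Finset.mem_add] at h2
  obtain ⟨β, hβ, γ, hγ, hsum2⟩ := h2
  exact h α hα β hβ γ hγ (by rw [add_assoc, hsum2, hsum])

lemma mem_support_X0_pderiv {q : MvPolynomial (Fin 3) ℂ} {ν : Fin 3 →₀ ℕ}
    (h : ν ∈ (X 0 * pderiv 0 q).support) : ν ∈ q.support := by
  have h1 := MvPolynomial.support_mul (X 0) (pderiv 0 q) h
  rw [Finset.mem_add] at h1
  obtain ⟨α, hα, β, hβ, hsum⟩ := h1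
  rw [MvPolynomial.support_X] at hα
  rw [Finset.mem_singleton] at hα
  subst hα
  have := mem_support_pderiv hβ
  rwa [← hsum, add_comm]

lemma mem_support_C1 {r : MvPolynomial (Fin 3) ℂ} {ρ : Fin 3 →₀ ℕ}
    (h : ρ ∈ ((X 1 + 1) * pderiv 1 r).support) :
    ∃ j ≤ 1, ρ + Finsupp.single 1 j ∈ r.support := by
  rw [add_mul, one_mul] at h
  have h1 := MvPolynomial.support_add h
  rw [Finset.mem_union] at h1
  rcases h1 with h1 | h1
  · have h2 := MvPolynomial.support_mul (X 1) (pderiv 1 r) h1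
    rw [Finset.mem_add] at h2
    obtain ⟨α, hα, β, hβ, hsum⟩ := h2
    rw [MvPolynomial.support_X, Finset.mem_singleton] at hα
    subst hα
    refine ⟨0, by omega, ?_⟩
    have := mem_support_pderiv hβ
    rw [Finsupp.single_zero, add_zero, ← hsum, add_comm]
    exact this
  · exact ⟨1, le_refl 1, mem_support_pderiv h1⟩

lemma coeff_TT_zero (τ : Fin 3 →₀ ℕ) (p q r : MvPolynomial (Fin 3) ℂ)
    (H : ∀ μ ∈ p.support, ∀ ν ∈ q.support, ∀ ρ ∈ r.support, ∀ j : ℕ, j ≤ 2 →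
      μ + ν + ρ ≠ τ + Finsupp.single 0 1 + Finsupp.single 1 j) :
    coeff τ (TT p q r) = 0 := by
  have C2supp : ∀ ρ ∈ (pderiv 1 ((X 1 + 1) * pderiv 1 r)).support,
      ∃ j ≤ 2, ρ + Finsupp.single 1 j ∈ r.support := by
    intro ρ hρ
    obtain ⟨j, hj, hmem⟩ := mem_support_C1 (mem_support_pderiv hρ)
    refine ⟨1 + j, by omega, ?_⟩
    rw [Finsupp.single_add, ← add_assoc]
    exact hmem
  have C3supp : ∀ ρ ∈ (pderiv 0 ((X 1 + 1) * pderiv 1 r)).support,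
      ∃ j ≤ 1, ρ + Finsupp.single 0 1 + Finsupp.single 1 j ∈ r.support := by
    intro ρ hρ
    exact mem_support_C1 (mem_support_pderiv hρ)
  rw [TT, mul_sub, mul_sub, coeff_sub, coeff_sub, coeff_sub]
  have Z1 : coeff τ (pderiv 0 p * (pderiv 1 (X 0 * pderiv 0 q) * ((X 1 + 1) * pderiv 1 r))) = 0 := by
    apply coeff_mul3_zero
    intro α hα β hβ γ hγ hsum
    obtain ⟨j, hj, hγ'⟩ := mem_support_C1 hγ
    refine H _ (mem_support_pderiv hα) _ (mem_support_X0_pderiv (mem_support_pderiv hβ)) _ hγ'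
      (1 + j) (by omega) ?_
    rw [← hsum, Finsupp.single_add]
    abel
  have Z2 : coeff τ (pderiv 0 p * (X 0 * pderiv 0 q * pderiv 1 ((X 1 + 1) * pderiv 1 r))) = 0 := by
    apply coeff_mul3_zero
    intro α hα β hβ γ hγ hsum
    obtain ⟨j, hj, hγ'⟩ := C2supp _ hγ
    refine H _ (mem_support_pderiv hα) _ (mem_support_X0_pderiv hβ) _ hγ' j hj ?_
    rw [← hsum]
    abel
  have Z3 : coeff τ (pderiv 1 p * (pderiv 0 (X 0 * pderiv 0 q) * ((X 1 + 1) * pderiv 1 r))) = 0 := by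
    apply coeff_mul3_zero
    intro α hα β hβ γ hγ hsum
    obtain ⟨j, hj, hγ'⟩ := mem_support_C1 hγ
    refine H _ (mem_support_pderiv hα) _ (mem_support_X0_pderiv (mem_support_pderiv hβ)) _ hγ'
      (1 + j) (by omega) ?_
    rw [← hsum, Finsupp.single_add]
    abel
  have Z4 : coeff τ (pderiv 1 p * (X 0 * pderiv 0 q * pderiv 0 ((X 1 + 1) * pderiv 1 r))) = 0 := by
    apply coeff_mul3_zero
    intro α hα β hβ γ hγ hsum
    obtain ⟨j, hj, hγ'⟩ := C3supp _ hγ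
    refine H _ (mem_support_pderiv hα) _ (mem_support_X0_pderiv hβ) _ hγ' (1 + j) (by omega) ?_
    rw [← hsum, Finsupp.single_add]
    abel
  rw [Z1, Z2, Z3, Z4]
  ring

lemma EE_e0k (a c : ℕ) : EE a 0 c = Finsupp.single 0 a + Finsupp.single 2 c := by simp [EE]
lemma EE_0j0 (j : ℕ) : Finsupp.single 1 j = EE 0 j 0 := by simp [EE]
lemma EE_sum_shift (A w t j : ℕ) :
    EE A w t + Finsupp.single 0 1 + Finsupp.single 1 j = EE (A+1) (w+j) t := by
  rw [← EE100, EE_0j0, EE_add, EE_add]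
  norm_num

lemma mono_Cpow2 (x : ℂ) (e k : ℕ) :
    C x * X 0 ^ e * X 2 ^ k = monomial (EE e 0 k) (x : ℂ) := by
  rw [C_mul_X_pow_eq_monomial, X_pow_eq_monomial, monomial_mul, EE_e0k, mul_one]

lemma mono_Cpow (x : ℂ) (e : ℕ) :
    C x * X 0 ^ e = (monomial (EE e 0 0) x : MvPolynomial (Fin 3) ℂ) := by
  rw [C_mul_X_pow_eq_monomial]
  congr 1
  simp [EE]

lemma mono_g1 (x : ℂ) (e : ℕ) :
    (X 0 ^ e : MvPolynomial (Fin 3) ℂ) * (C x * X 1) = monomial (EE e 1 0) x := by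
  rw [show (X 1 : MvPolynomial (Fin 3) ℂ) = X 1 ^ 1 from (pow_one _).symm,
    C_mul_X_pow_eq_monomial, X_pow_eq_monomial, monomial_mul, one_mul]
  congr 1
  simp [EE]

lemma mono_g2 (x : ℂ) (e k : ℕ) :
    (X 0 ^ e : MvPolynomial (Fin 3) ℂ) * (C x * X 2 ^ k) = monomial (EE e 0 k) x := by
  rw [C_mul_X_pow_eq_monomial, X_pow_eq_monomial, monomial_mul, one_mul]
  congr 1
  simp [EE]

lemma mem_support_mono {e : Fin 3 →₀ ℕ} {x : ℂ} {s : Fin 3 →₀ ℕ}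
    (h : s ∈ (monomial e x).support) : s = e := by
  by_contra hne
  rw [MvPolynomial.mem_support_iff, coeff_monomial, if_neg (fun he => hne he.symm)] at h
  exact h rfl

lemma mem_support_X0pow_mul {e : ℕ} {p : MvPolynomial (Fin 3) ℂ} {s : Fin 3 →₀ ℕ}
    (h : s ∈ ((X 0 : MvPolynomial (Fin 3) ℂ) ^ e * p).support) :
    ∃ t ∈ p.support, s = EE e 0 0 + t := by
  rw [X_pow_eq_monomial] at h
  have h1 := MvPolynomial.support_mul _ _ h
  rw [Finset.mem_add] at h1
  obtain ⟨α, hα, β, hβ, hsum⟩ := h1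
  have := mem_support_mono hα
  subst this
  refine ⟨β, hβ, ?_⟩
  rw [← hsum]
  congr 1
  simp [EE]
section KEY
variable (ℓ κ m δ : ℕ)

def Pmid (s : Fin 3 →₀ ℕ) : Prop :=
  s = EE ℓ 1 0 ∨ s = EE ℓ 0 δ ∨ s = EE (ℓ-1) 0 κ ∨ s = EE (ℓ+1) 0 0 ∨
    κ * s 0 + m * s 1 + 2 * s 2 > κ * ℓ + m

def Phigh (s : Fin 3 →₀ ℕ) : Prop :=
  s = EE (ℓ-1) 0 κ ∨ s = EE (ℓ+1) 0 0 ∨ κ * s 0 + m * s 1 + 2 * s 2 > κ * ℓ + m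

lemma Pmid_lb (hℓ : 2 ≤ ℓ) (hmκ : m ≤ κ) (hmδ : m = 2*δ) (s : Fin 3 →₀ ℕ)
    (h : Pmid ℓ κ m δ s) : κ * s 0 + m * s 1 + 2 * s 2 ≥ κ * ℓ + m := by
  obtain ⟨L, rfl⟩ : ∃ L, ℓ = L + 1 := ⟨ℓ-1, by omega⟩
  rcases h with rfl | rfl | rfl | rfl | h
  · rw [EE_apply0, EE_apply1, EE_apply2]; nlinarith
  · rw [EE_apply0, EE_apply1, EE_apply2]; nlinarith
  · rw [EE_apply0, EE_apply1, EE_apply2]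
    simp only [Nat.add_sub_cancel]
    nlinarith
  · rw [EE_apply0, EE_apply1, EE_apply2]; nlinarith
  · omega

lemma key (hℓ : 2 ≤ ℓ) (hκ : 1 ≤ κ) (hm1 : 1 ≤ m) (hmκ : m ≤ κ) (hδ1 : 1 ≤ δ)
    (hδκ : 2*δ ≤ κ) (hmδ : m = 2*δ) (μ ν ρ : Fin 3 →₀ ℕ)
    (hμ : Phigh ℓ κ m μ) (hν : Pmid ℓ κ m δ ν) (hρ : Pmid ℓ κ m δ ρ)
    (hz : μ 0 + ν 0 + ρ 0 = 3*ℓ)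
    (ht : μ 2 + ν 2 + ρ 2 < 2*δ)
    (hWs : κ*(μ 0 + ν 0 + ρ 0) + m*(μ 1 + ν 1 + ρ 1) + 2*(μ 2 + ν 2 + ρ 2)
      ≤ 3*(κ*ℓ+m)) : False := by
  have lbν := Pmid_lb ℓ κ m δ hℓ hmκ hmδ ν hν
  have lbρ := Pmid_lb ℓ κ m δ hℓ hmκ hmδ ρ hρ
  have hWμ : κ * μ 0 + m * μ 1 + 2 * μ 2 ≤ κ*ℓ + m := by linarith
  rcases hμ with rfl | rfl | h
  · simp only [EE_apply2] at ht; omega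
  · -- μ = EE (ℓ+1) 0 0 : here κ = m
    simp only [EE_apply0, EE_apply1, EE_apply2] at hWμ hz ht hWs
    have hκm : κ = m := by nlinarith
    have hWν : κ * ν 0 + m * ν 1 + 2 * ν 2 ≤ κ*ℓ + m := by nlinarith
    have hWρ : κ * ρ 0 + m * ρ 1 + 2 * ρ 2 ≤ κ*ℓ + m := by nlinarith
    have hcneν : ¬ (κ * ν 0 + m * ν 1 + 2 * ν 2 > κ * ℓ + m) := by omega
    have hcneρ : ¬ (κ * ρ 0 + m * ρ 1 + 2 * ρ 2 > κ * ℓ + m) := by omega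
    have hν' : (ν 0 ≥ ℓ ∧ ν 2 ≤ δ) ∨ ν 2 = κ := by
      rcases hν with rfl | rfl | rfl | rfl | h
      · simp only [EE_apply0, EE_apply2]; left; omega
      · simp only [EE_apply0, EE_apply2]; left; omega
      · simp only [EE_apply2]; right; trivial
      · simp only [EE_apply0, EE_apply2]; left; omega
      · exact absurd h hcneν
    have hρ' : (ρ 0 ≥ ℓ ∧ ρ 2 ≤ δ) ∨ ρ 2 = κ := by
      rcases hρ with rfl | rfl | rfl | rfl | h
      · simp only [EE_apply0, EE_apply2]; left; omega
      · simp only [EE_apply0, EE_apply2]; left; omega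
      · simp only [EE_apply2]; right; trivial
      · simp only [EE_apply0, EE_apply2]; left; omega
      · exact absurd h hcneρ
    rcases hν' with ⟨h1, h2⟩ | h1
    · rcases hρ' with ⟨h3, h4⟩ | h3
      · omega
      · omega
    · omega
  · omega
end KEY


section KEY2
variable (ℓ κ m δ : ℕ)

lemma Phigh_Pmid {s : Fin 3 →₀ ℕ} (h : Phigh ℓ κ m s) : Pmid ℓ κ m δ s := by
  rcases h with h | h | h
  · right; right; left; exact h
  · right; right; right; left; exact h
  · right; right; right; right; exact h

lemma vanishTT (hℓ : 2 ≤ ℓ) (hκ : 1 ≤ κ) (hm1 : 1 ≤ m) (hmκ : m ≤ κ) (hδ1 : 1 ≤ δ)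
    (hδκ : 2*δ ≤ κ) (hmδ : m = 2*δ) (p q r : MvPolynomial (Fin 3) ℂ)
    (hp : ∀ s ∈ p.support, Pmid ℓ κ m δ s)
    (hq : ∀ s ∈ q.support, Pmid ℓ κ m δ s)
    (hr : ∀ s ∈ r.support, Pmid ℓ κ m δ s)
    (hone : (∀ s ∈ p.support, Phigh ℓ κ m s) ∨ (∀ s ∈ q.support, Phigh ℓ κ m s) ∨
      (∀ s ∈ r.support, Phigh ℓ κ m s))
    (w t : ℕ) (hτ : (w = 1 ∧ t = 0) ∨ (w = 0 ∧ t = δ)) :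
    coeff (EE (3*ℓ-1) w t) (TT p q r) = 0 := by
  apply coeff_TT_zero
  intro μ hμ ν hν ρ hρ j hj heq
  rw [EE_sum_shift] at heq
  have e0 := DFunLike.congr_fun heq 0
  have e1 := DFunLike.congr_fun heq 1
  have e2 := DFunLike.congr_fun heq 2
  simp only [Finsupp.add_apply, EE_apply0, EE_apply1, EE_apply2] at e0 e1 e2
  have hz : μ 0 + ν 0 + ρ 0 = 3*ℓ := by omega
  have ht2 : μ 2 + ν 2 + ρ 2 < 2*δ := by omega
  have hWs : κ*(μ 0 + ν 0 + ρ 0) + m*(μ 1 + ν 1 + ρ 1) + 2*(μ 2 + ν 2 + ρ 2)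
      ≤ 3*(κ*ℓ+m) := by
    rw [hz, e1, e2]
    have hjm : m * j ≤ m * 2 := Nat.mul_le_mul_left m hj
    rcases hτ with ⟨rfl, rfl⟩ | ⟨rfl, rfl⟩ <;> nlinarith
  rcases hone with hP | hP | hP
  · exact key ℓ κ m δ hℓ hκ hm1 hmκ hδ1 hδκ hmδ μ ν ρ (hP μ hμ) (hq ν hν) (hr ρ hρ) hz ht2 hWs
  · exact key ℓ κ m δ hℓ hκ hm1 hmκ hδ1 hδκ hmδ ν μ ρ (hP ν hν) (hp μ hμ) (hr ρ hρ)
      (by omega) (by omega) (by linarith)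
  · exact key ℓ κ m δ hℓ hκ hm1 hmκ hδ1 hδκ hmδ ρ μ ν (hP ρ hρ) (hp μ hμ) (hq ν hν)
      (by omega) (by omega) (by linarith)
end KEY2


theorem stmt9 (ℓ κ m δ : ℕ) (hℓ : 2 ≤ ℓ) (hκ : 1 ≤ κ) (hm1 : 1 ≤ m) (hmκ : m ≤ κ)
    (hδ1 : 1 ≤ δ) (hδκ : 2 * δ ≤ κ) (hmδ : m = 2 * δ)
    (a b c : ℂ) (ha : a ≠ 0) (hb : b ≠ 0) (hc : c ≠ 0) (d : ℂ)
    (f Q R Qt : MvPolynomial (Fin 3) ℂ)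
    (hsupp : ∀ mo ∈ f.support, κ * mo 0 + mo 2 ≥ κ * ℓ)
    (hQvars : ∀ mo ∈ Q.support, mo 0 = 0)
    (hQ0 : Q.coeff 0 = 0)
    (hQw : Q.coeff (Finsupp.single 1 1) = b)
    (hR : ∀ mo ∈ R.support, κ * mo 0 + m * mo 1 + 2 * mo 2 > κ * (ℓ + 1))
    (hf : f = C c * X 0 ^ (ℓ - 1) * X 2 ^ κ + X 0 ^ ℓ * Q + C a * X 0 ^ (ℓ + 1) + R)
    (hQtvars : ∀ mo ∈ Qt.support, mo 0 = 0)
    (hQt : ∀ mo ∈ Qt.support, m * mo 1 + 2 * mo 2 > m ∧ mo 1 + 2 * mo 2 > 2 * δ)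
    (hQdec : Q = C b * X 1 + C d * X 2 ^ δ + Qt) :
    (Ntilde f).coeff (Finsupp.single 0 (3 * ℓ - 1) + Finsupp.single 1 1)
        = (ℓ : ℂ) ^ 2 * b ^ 3 ∧
      (d ≠ 0 →
        (Ntilde f).coeff (Finsupp.single 0 (3 * ℓ - 1) + Finsupp.single 2 δ)
          = (ℓ : ℂ) ^ 2 * b ^ 2 * d) ∧
      Ntilde f ≠ 0 := by
  have hτ1 : Finsupp.single 0 (3*ℓ-1) + Finsupp.single 1 1 = EE (3*ℓ-1) 1 0 := by
    simp [EE]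
  have hτ2 : Finsupp.single 0 (3*ℓ-1) + Finsupp.single 2 δ = EE (3*ℓ-1) 0 δ := by
    simp [EE]
  have hNT : Ntilde f = TT f f f := rfl
  set g1 : MvPolynomial (Fin 3) ℂ := monomial (EE ℓ 1 0) b with hg1
  set g2 : MvPolynomial (Fin 3) ℂ := monomial (EE ℓ 0 δ) d with hg2
  set hh : MvPolynomial (Fin 3) ℂ :=
    C c * X 0 ^ (ℓ - 1) * X 2 ^ κ + X 0 ^ ℓ * Qt + C a * X 0 ^ (ℓ + 1) + R with hhh
  have hfG : f = g1 + g2 + hh := by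
    rw [hf, hQdec, mul_add, mul_add, mono_g1, mono_g2, hg1, hg2, hhh]
    ring
  -- support properties
  have hPg : ∀ s ∈ (g1 + g2).support, Pmid ℓ κ m δ s := by
    intro s hs
    rcases Finset.mem_union.mp (MvPolynomial.support_add hs) with hs | hs
    · exact Or.inl (mem_support_mono hs)
    · exact Or.inr (Or.inl (mem_support_mono hs))
  have hPhh : ∀ s ∈ hh.support, Phigh ℓ κ m s := by
    intro s hs
    rw [hhh] at hs
    rcases Finset.mem_union.mp (MvPolynomial.support_add hs) with hs | hs
    rcases Finset.mem_union.mp (MvPolynomial.support_add hs) with hs | hs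
    rcases Finset.mem_union.mp (MvPolynomial.support_add hs) with hs | hs
    · rw [mono_Cpow2] at hs
      exact Or.inl (mem_support_mono hs)
    · obtain ⟨t, ht, rfl⟩ := mem_support_X0pow_mul hs
      right; right
      have h0 : (EE ℓ 0 0 + t) 0 = ℓ + t 0 := by rw [Finsupp.add_apply, EE_apply0]
      have h1 : (EE ℓ 0 0 + t) 1 = t 1 := by rw [Finsupp.add_apply, EE_apply1, zero_add]
      have h2 : (EE ℓ 0 0 + t) 2 = t 2 := by rw [Finsupp.add_apply, EE_apply2, zero_add]
      rw [h0, h1, h2, hQtvars t ht, add_zero]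
      have := (hQt t ht).1
      linarith
    · rw [mono_Cpow] at hs
      exact Or.inr (Or.inl (mem_support_mono hs))
    · right; right
      have := hR s hs
      nlinarith
  have hPf : ∀ s ∈ f.support, Pmid ℓ κ m δ s := by
    intro s hs
    rw [hfG] at hs
    rcases Finset.mem_union.mp (MvPolynomial.support_add hs) with hs | hs
    · exact hPg s hs
    · exact Phigh_Pmid ℓ κ m δ (hPhh s hs)
  -- telescoping
  have e1 : TT f f f = TT (g1 + g2) f f + TT hh f f := by
    nth_rewrite 1 [hfG]; rw [TT_add_left]
  have e2 : TT (g1 + g2) f f = TT (g1 + g2) (g1 + g2) f + TT (g1 + g2) hh f := by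
    nth_rewrite 1 [hfG]; rw [TT_add_mid]
  have e3 : TT (g1 + g2) (g1 + g2) f
      = TT (g1 + g2) (g1 + g2) (g1 + g2) + TT (g1 + g2) (g1 + g2) hh := by
    nth_rewrite 1 [hfG]; rw [TT_add_right]
  -- zero lemma for last slot g2
  have hd1g2 : pderiv 1 g2 = 0 := by rw [hg2, pd1_mono]; norm_num
  have hTr0 : ∀ p q : MvPolynomial (Fin 3) ℂ, TT p q g2 = 0 := by
    intro p q
    rw [TT, hd1g2, mul_zero, map_zero, mul_zero, map_zero]
    ring
  have eG : TT (g1 + g2) (g1 + g2) (g1 + g2)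
      = TT g1 g1 g1 + TT g1 g2 g1 + TT g2 g1 g1 + TT g2 g2 g1 := by
    simp only [TT_add_left, TT_add_mid, TT_add_right, hTr0, add_zero, zero_add]
    ring
  -- main coefficient computation
  have hvan : ∀ w t : ℕ, (w = 1 ∧ t = 0) ∨ (w = 0 ∧ t = δ) →
      coeff (EE (3*ℓ-1) w t) (TT f f f)
        = coeff (EE (3*ℓ-1) w t) (TT g1 g1 g1) + coeff (EE (3*ℓ-1) w t) (TT g1 g2 g1)
          + coeff (EE (3*ℓ-1) w t) (TT g2 g1 g1) + coeff (EE (3*ℓ-1) w t) (TT g2 g2 g1) := by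
    intro w t hwt
    rw [e1, e2, e3, eG]
    simp only [coeff_add]
    rw [vanishTT ℓ κ m δ hℓ hκ hm1 hmκ hδ1 hδκ hmδ _ _ _ hPg hPg
        (fun s hs => Phigh_Pmid ℓ κ m δ (hPhh s hs)) (Or.inr (Or.inr hPhh)) w t hwt,
      vanishTT ℓ κ m δ hℓ hκ hm1 hmκ hδ1 hδκ hmδ _ _ _ hPg
        (fun s hs => Phigh_Pmid ℓ κ m δ (hPhh s hs)) hPf (Or.inr (Or.inl hPhh)) w t hwt,
      vanishTT ℓ κ m δ hℓ hκ hm1 hmκ hδ1 hδκ hmδ _ _ _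
        (fun s hs => Phigh_Pmid ℓ κ m δ (hPhh s hs)) hPf hPf (Or.inl hPhh) w t hwt]
    ring
  -- the four explicit computations
  have hl1 : ℓ - 1 + 1 = ℓ := by omega
  have docomp : ∀ (gi gj : MvPolynomial (Fin 3) ℂ), ∀ w t : ℕ, ∀ v : ℂ,
      True → True → coeff (EE (3*ℓ-1) w t) (TT gi gj g1) = v → True := fun _ _ _ _ _ _ _ _ => trivial
  clear docomp
  have hC111a : coeff (EE (3*ℓ-1) 1 0) (TT g1 g1 g1) = (ℓ:ℂ)^2 * b^3 := by
    simp only [TT, hg1, pd0_mono, pd1_mono, X0_mul_mono, add_mul, one_mul, X1_mul_mono,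
      map_add, mul_add, mul_sub, sub_mul, mono_mul, hl1, coeff_add, coeff_sub, coeff_mono]
    norm_num
    try split_ifs
    all_goals first | (exfalso; omega) | (push_cast; ring1) | (intros; exfalso; omega) | (intros; push_cast; ring1) | norm_num
  have hC111b : coeff (EE (3*ℓ-1) 0 δ) (TT g1 g1 g1) = 0 := by
    simp only [TT, hg1, pd0_mono, pd1_mono, X0_mul_mono, add_mul, one_mul, X1_mul_mono,
      map_add, mul_add, mul_sub, sub_mul, mono_mul, hl1, coeff_add, coeff_sub, coeff_mono]
    norm_num
    try split_ifs
    all_goals first | (exfalso; omega) | (push_cast; ring1) | (intros; exfalso; omega) | (intros; push_cast; ring1) | norm_num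
  have hC121a : coeff (EE (3*ℓ-1) 1 0) (TT g1 g2 g1) = 0 := by
    simp only [TT, hg1, hg2, pd0_mono, pd1_mono, X0_mul_mono, add_mul, one_mul, X1_mul_mono,
      map_add, mul_add, mul_sub, sub_mul, mono_mul, hl1, coeff_add, coeff_sub, coeff_mono]
    norm_num
    try split_ifs
    all_goals first | (exfalso; omega) | (push_cast; ring1) | (intros; exfalso; omega) | (intros; push_cast; ring1) | norm_num
  have hC121b : coeff (EE (3*ℓ-1) 0 δ) (TT g1 g2 g1) = 0 := by
    simp only [TT, hg1, hg2, pd0_mono, pd1_mono, X0_mul_mono, add_mul, one_mul, X1_mul_mono,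
      map_add, mul_add, mul_sub, sub_mul, mono_mul, hl1, coeff_add, coeff_sub, coeff_mono]
    norm_num
    try split_ifs
    all_goals first | (exfalso; omega) | (push_cast; ring1) | (intros; exfalso; omega) | (intros; push_cast; ring1) | norm_num
  have hC211a : coeff (EE (3*ℓ-1) 1 0) (TT g2 g1 g1) = 0 := by
    simp only [TT, hg1, hg2, pd0_mono, pd1_mono, X0_mul_mono, add_mul, one_mul, X1_mul_mono,
      map_add, mul_add, mul_sub, sub_mul, mono_mul, hl1, coeff_add, coeff_sub, coeff_mono]
    norm_num
    try split_ifs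
    all_goals first | (exfalso; omega) | (push_cast; ring1) | (intros; exfalso; omega) | (intros; push_cast; ring1) | norm_num
  have hC211b : coeff (EE (3*ℓ-1) 0 δ) (TT g2 g1 g1) = (ℓ:ℂ)^2 * b^2 * d := by
    simp only [TT, hg1, hg2, pd0_mono, pd1_mono, X0_mul_mono, add_mul, one_mul, X1_mul_mono,
      map_add, mul_add, mul_sub, sub_mul, mono_mul, hl1, coeff_add, coeff_sub, coeff_mono]
    norm_num
    try split_ifs
    all_goals first | (exfalso; omega) | (push_cast; ring1) | (intros; exfalso; omega) | (intros; push_cast; ring1) | norm_num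
  have hC221a : coeff (EE (3*ℓ-1) 1 0) (TT g2 g2 g1) = 0 := by
    simp only [TT, hg1, hg2, pd0_mono, pd1_mono, X0_mul_mono, add_mul, one_mul, X1_mul_mono,
      map_add, mul_add, mul_sub, sub_mul, mono_mul, hl1, coeff_add, coeff_sub, coeff_mono]
    norm_num
    try split_ifs
    all_goals first | (exfalso; omega) | (push_cast; ring1) | (intros; exfalso; omega) | (intros; push_cast; ring1) | norm_num
  have hC221b : coeff (EE (3*ℓ-1) 0 δ) (TT g2 g2 g1) = 0 := by
    simp only [TT, hg1, hg2, pd0_mono, pd1_mono, X0_mul_mono, add_mul, one_mul, X1_mul_mono,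
      map_add, mul_add, mul_sub, sub_mul, mono_mul, hl1, coeff_add, coeff_sub, coeff_mono]
    norm_num
    try split_ifs
    all_goals first | (exfalso; omega) | (push_cast; ring1) | (intros; exfalso; omega) | (intros; push_cast; ring1) | norm_num
  have hcoef1 : (Ntilde f).coeff (Finsupp.single 0 (3 * ℓ - 1) + Finsupp.single 1 1)
      = (ℓ : ℂ)^2 * b^3 := by
    rw [show (Ntilde f).coeff (Finsupp.single 0 (3 * ℓ - 1) + Finsupp.single 1 1)
        = coeff (Finsupp.single 0 (3 * ℓ - 1) + Finsupp.single 1 1) (Ntilde f) from rfl,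
      hτ1, hNT, hvan 1 0 (Or.inl ⟨rfl, rfl⟩), hC111a, hC121a, hC211a, hC221a]
    ring
  have hcoef2 : (Ntilde f).coeff (Finsupp.single 0 (3 * ℓ - 1) + Finsupp.single 2 δ)
      = (ℓ : ℂ)^2 * b^2 * d := by
    rw [show (Ntilde f).coeff (Finsupp.single 0 (3 * ℓ - 1) + Finsupp.single 2 δ)
        = coeff (Finsupp.single 0 (3 * ℓ - 1) + Finsupp.single 2 δ) (Ntilde f) from rfl,
      hτ2, hNT, hvan 0 δ (Or.inr ⟨rfl, rfl⟩), hC111b, hC121b, hC211b, hC221b]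
    ring
  refine ⟨hcoef1, fun _ => hcoef2, ?_⟩
  intro h0
  rw [h0] at hcoef1
  simp only [coeff_zero] at hcoef1
  have hln : (ℓ:ℂ) ≠ 0 := Nat.cast_ne_zero.mpr (by omega)
  exact (mul_ne_zero (pow_ne_zero 2 hln) (pow_ne_zero 3 hb)) hcoef1.symm
end

section
/- Let κ ≥ 1 and ℓ ≥ 1 be integers and let f̃ ∈ ℂ[z,w,t] be a polynomial such that every monomial z^{j₁}w^{j₂}t^{j₃} of f̃ satisfies κ·j₁ + j₃ ≥ κℓ. Then every monomial z^{j₁}w^{j₂}t^{j₃} of the polynomial Ñ satisfies κ·j₁ + j₃ ≥ κ(3ℓ−1); that is, the Newton polyhedron of Ñ is contained in the translation by (2ℓ−1, 0, 0) of the half-space H₁ = {(j₁,j₂,j₃) : j₃ ≥ −κj₁ + ℓκ} (containment in the translates of H₂ = {j₂ ≥ 0} and H₃ = {j₃ ≥ 0} being automatic for polynomials). -/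
open MvPolynomial

namespace Stmt10Aux

abbrev W (κ : ℕ) (m : Fin 3 →₀ ℕ) : ℕ := κ * m 0 + m 2

lemma W_add (κ : ℕ) (m n : Fin 3 →₀ ℕ) : W κ (m + n) = W κ m + W κ n := by
  simp only [W, Finsupp.add_apply]; ring

lemma mono {κ a b : ℕ} {p : MvPolynomial (Fin 3) ℂ}
    (hp : ∀ m ∈ p.support, a ≤ W κ m) (h : b ≤ a) :
    ∀ m ∈ p.support, b ≤ W κ m := fun m hm => le_trans h (hp m hm)

lemma mul_bound {κ a b : ℕ} {p q : MvPolynomial (Fin 3) ℂ}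
    (hp : ∀ m ∈ p.support, a ≤ W κ m) (hq : ∀ m ∈ q.support, b ≤ W κ m) :
    ∀ m ∈ (p * q).support, a + b ≤ W κ m := by
  intro m hm
  classical
  obtain ⟨m1, hm1, m2, hm2, rfl⟩ := Finset.mem_add.mp (MvPolynomial.support_mul p q hm)
  rw [W_add]; exact Nat.add_le_add (hp _ hm1) (hq _ hm2)

lemma sub_bound {κ a : ℕ} {p q : MvPolynomial (Fin 3) ℂ}
    (hp : ∀ m ∈ p.support, a ≤ W κ m) (hq : ∀ m ∈ q.support, a ≤ W κ m) :
    ∀ m ∈ (p - q).support, a ≤ W κ m := by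
  intro m hm
  classical
  rcases Finset.mem_union.mp (MvPolynomial.support_sub _ p q hm) with h | h
  exacts [hp _ h, hq _ h]

lemma pd_support (i : Fin 3) (p : MvPolynomial (Fin 3) ℂ) :
    ∀ m ∈ (MvPolynomial.pderiv i p).support,
      ∃ m' ∈ p.support, m = m' - Finsupp.single i 1 := by
  intro m hm
  classical
  rw [p.as_sum, map_sum] at hm
  obtain ⟨m', hm', hmem⟩ := Finset.mem_biUnion.mp (MvPolynomial.support_sum hm)
  rw [MvPolynomial.pderiv_monomial] at hmem
  exact ⟨m', hm', Finset.mem_singleton.mp (MvPolynomial.support_monomial_subset hmem)⟩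

lemma pd0_bound {κ a : ℕ} {p : MvPolynomial (Fin 3) ℂ}
    (hp : ∀ m ∈ p.support, a ≤ W κ m) :
    ∀ m ∈ (MvPolynomial.pderiv 0 p).support, a - κ ≤ W κ m := by
  intro m hm
  obtain ⟨m', hm', rfl⟩ := pd_support 0 p m hm
  have h := hp m' hm'
  have e0 : (Finsupp.single (0 : Fin 3) 1) 0 = 1 := Finsupp.single_eq_same
  have e2 : (Finsupp.single (0 : Fin 3) 1) 2 = 0 := Finsupp.single_eq_of_ne (by decide)
  have key : κ * m' 0 ≤ κ * (m' 0 - 1) + κ := by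
    have h1 : m' 0 ≤ (m' 0 - 1) + 1 := by omega
    calc κ * m' 0 ≤ κ * ((m' 0 - 1) + 1) := Nat.mul_le_mul_left κ h1
      _ = κ * (m' 0 - 1) + κ := by ring
  simp only [W, Finsupp.tsub_apply, e0, e2, Nat.sub_zero] at h ⊢
  omega

lemma pd1_bound {κ a : ℕ} {p : MvPolynomial (Fin 3) ℂ}
    (hp : ∀ m ∈ p.support, a ≤ W κ m) :
    ∀ m ∈ (MvPolynomial.pderiv 1 p).support, a ≤ W κ m := by
  intro m hm
  obtain ⟨m', hm', rfl⟩ := pd_support 1 p m hm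
  have h := hp m' hm'
  have e0 : (Finsupp.single (1 : Fin 3) 1) 0 = 0 := Finsupp.single_eq_of_ne (by decide)
  have e2 : (Finsupp.single (1 : Fin 3) 1) 2 = 0 := Finsupp.single_eq_of_ne (by decide)
  simp only [W, Finsupp.tsub_apply, e0, e2, Nat.sub_zero] at h ⊢
  omega

lemma X0_bound (κ : ℕ) :
    ∀ m ∈ (MvPolynomial.X 0 : MvPolynomial (Fin 3) ℂ).support, κ ≤ W κ m := by
  intro m hm
  rw [MvPolynomial.support_X, Finset.mem_singleton] at hm
  subst hm
  simp [W, Finsupp.single_apply]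

lemma X1add1_bound (κ : ℕ) :
    ∀ m ∈ (MvPolynomial.X 1 + 1 : MvPolynomial (Fin 3) ℂ).support, 0 ≤ W κ m :=
  fun m _ => Nat.zero_le _

end Stmt10Aux

theorem stmt10 (κ ℓ : ℕ) (hκ : 1 ≤ κ) (hℓ : 1 ≤ ℓ)
    (f : MvPolynomial (Fin 3) ℂ)
    (hf : ∀ mo ∈ f.support, κ * mo 0 + mo 2 ≥ κ * ℓ) :
    ∀ mo ∈ (Ntilde f).support, κ * mo 0 + mo 2 ≥ κ * (3 * ℓ - 1) := by
  open Stmt10Aux in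
  have hκℓ : κ ≤ κ * ℓ := Nat.le_mul_of_pos_right κ hℓ
  have hf' : ∀ m ∈ f.support, κ * ℓ ≤ W κ m := hf
  -- partial derivatives of f
  have hfz : ∀ m ∈ (pderiv 0 f).support, κ * ℓ - κ ≤ W κ m := pd0_bound hf'
  have hfw : ∀ m ∈ (pderiv 1 f).support, κ * ℓ ≤ W κ m := pd1_bound hf'
  -- A = X 0 * pderiv 0 f
  have hA : ∀ m ∈ (X 0 * pderiv 0 f).support, κ * ℓ ≤ W κ m := by
    have := mul_bound (X0_bound κ) hfz
    exact mono this (by omega)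
  -- B = (X 1 + 1) * pderiv 1 f
  have hB : ∀ m ∈ ((X 1 + 1) * pderiv 1 f).support, κ * ℓ ≤ W κ m := by
    have := mul_bound (X1add1_bound κ) hfw
    exact mono this (by omega)
  have hAw : ∀ m ∈ (pderiv 1 (X 0 * pderiv 0 f)).support, κ * ℓ ≤ W κ m := pd1_bound hA
  have hAz : ∀ m ∈ (pderiv 0 (X 0 * pderiv 0 f)).support, κ * ℓ - κ ≤ W κ m := pd0_bound hA
  have hBw : ∀ m ∈ (pderiv 1 ((X 1 + 1) * pderiv 1 f)).support, κ * ℓ ≤ W κ m := pd1_bound hB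
  have hBz : ∀ m ∈ (pderiv 0 ((X 1 + 1) * pderiv 1 f)).support, κ * ℓ - κ ≤ W κ m :=
    pd0_bound hB
  -- Γ_w
  have hΓw : ∀ m ∈ (pderiv 1 (X 0 * pderiv 0 f) * ((X 1 + 1) * pderiv 1 f) -
      (X 0 * pderiv 0 f) * pderiv 1 ((X 1 + 1) * pderiv 1 f)).support,
      κ * ℓ + κ * ℓ ≤ W κ m :=
    sub_bound (mul_bound hAw hB) (mul_bound hA hBw)
  -- Γ_z
  have hΓz : ∀ m ∈ (pderiv 0 (X 0 * pderiv 0 f) * ((X 1 + 1) * pderiv 1 f) -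
      (X 0 * pderiv 0 f) * pderiv 0 ((X 1 + 1) * pderiv 1 f)).support,
      (κ * ℓ - κ) + κ * ℓ ≤ W κ m :=
    sub_bound (mul_bound hAz hB) (mono (mul_bound hA hBz) (by omega))
  have hN : ∀ m ∈ (Ntilde f).support, (κ * ℓ - κ) + (κ * ℓ + κ * ℓ) ≤ W κ m := by
    unfold Ntilde
    exact sub_bound (mul_bound hfz hΓw)
      (mono (mul_bound hfw hΓz) (by omega))
  intro mo hmo
  have h := hN mo hmo
  have h3 : κ * (3 * ℓ - 1) + κ = κ * (3 * ℓ) := by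
    have h4 : (3 * ℓ - 1) + 1 = 3 * ℓ := by omega
    calc κ * (3 * ℓ - 1) + κ = κ * ((3 * ℓ - 1) + 1) := by ring
      _ = κ * (3 * ℓ) := by rw [h4]
  have h5 : κ * (3 * ℓ) = 3 * (κ * ℓ) := by ring
  simp only [W] at h
  omega
end

section
/- Let m ≥ 1 be an integer, a ∈ ℂ∖{0}, and let z, w be analytic functions on a neighborhood of 0 ∈ ℂ with z(s) = s + o(s) and w(s) = 1 + a·s^m + o(s^m) as s → 0. Then the function g(s) = −(w′(s)/w(s))·(z(s)/z′(s)), which is the logarithmic Gauss map [−(d/ds)log w(s) : (d/ds)log z(s)] read in the affine chart [u:v] ↦ u/v, satisfies g(s) = −a·m·s^m + o(s^m) as s → 0; in particular, the analytic extension of g to 0 has a critical point at s = 0 if and only if m > 1. -/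
open Asymptotics Filter

lemma analyticAt_deriv' {f : ℂ → ℂ} {x : ℂ} (hf : AnalyticAt ℂ f x) : AnalyticAt ℂ (deriv f) x := by
  have h1 : AnalyticAt ℂ (fun y => fderiv ℂ f y 1) x :=
    ((ContinuousLinearMap.apply ℂ ℂ (1:ℂ)).analyticAt _).comp hf.fderiv
  have : (fun y => fderiv ℂ f y 1) = deriv f := by funext y; rw [fderiv_apply_one_eq_deriv]
  rwa [this] at h1

lemma pow_isBigO_pow_of_le {i j : ℕ} (h : j ≤ i) :
    (fun s : ℂ => s ^ i) =O[nhds 0] fun s : ℂ => s ^ j := by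
  have he : (fun s : ℂ => s ^ i) = fun s : ℂ => s ^ j * s ^ (i - j) := by
    funext s; rw [← pow_add]; congr 1; omega
  rw [he]
  have h1 : (fun s : ℂ => s ^ (i - j)) =O[nhds 0] (fun _ : ℂ => (1:ℂ)) :=
    ((continuous_pow (i - j)).tendsto 0).isBigO_one ℂ
  simpa using (isBigO_refl (fun s : ℂ => s ^ j) (nhds 0)).mul h1

lemma pow_succ_isLittleO_pow (n : ℕ) :
    (fun s : ℂ => s ^ (n + 1)) =o[nhds 0] fun s : ℂ => s ^ n := by
  have h1 : (fun s : ℂ => s) =o[nhds 0] (fun _ : ℂ => (1:ℂ)) :=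
    (isLittleO_one_iff ℂ).mpr tendsto_id
  have := (isBigO_refl (fun s : ℂ => s ^ n) (nhds 0)).mul_isLittleO h1
  simpa [pow_succ] using this

lemma cmpO {f g₁ g₂ : ℂ → ℂ} {l : Filter ℂ} (h : f =O[l] g₁) (e : g₂ = g₁) :
    f =O[l] g₂ := e ▸ h

lemma factor_pow {f : ℂ → ℂ} {n : ℕ} (hf : AnalyticAt ℂ f 0)
    (ho : f =o[nhds 0] fun s : ℂ => s ^ n) :
    ∃ h : ℂ → ℂ, AnalyticAt ℂ h 0 ∧ ∀ᶠ s in nhds 0, f s = s ^ (n + 1) * h s := by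
  rcases eq_or_ne (analyticOrderAt f 0) ⊤ with htop | hfin
  · refine ⟨0, analyticAt_const, ?_⟩
    filter_upwards [analyticOrderAt_eq_top.mp htop] with s hs
    simp [hs]
  · obtain ⟨k, hk⟩ := WithTop.ne_top_iff_exists.mp hfin
    obtain ⟨g, hg, hg0, hfg⟩ := (hf.analyticOrderAt_eq_natCast (n := k)).mp hk.symm
    have hkn : n + 1 ≤ k := by
      by_contra hle
      have hkn' : k ≤ n := by omega
      have h1 : f =o[nhds 0] fun s : ℂ => s ^ k :=
        ho.trans_isBigO (pow_isBigO_pow_of_le hkn')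
      have h2 : Tendsto (fun s : ℂ => f s / s ^ k) (nhds 0) (nhds 0) :=
        h1.tendsto_div_nhds_zero
      have heq : (fun s : ℂ => f s / s ^ k) =ᶠ[nhdsWithin (0:ℂ) {(0:ℂ)}ᶜ] g := by
        filter_upwards [hfg.filter_mono nhdsWithin_le_nhds, self_mem_nhdsWithin] with s hs hs0
        simp only [Set.mem_compl_iff, Set.mem_singleton_iff] at hs0
        rw [hs, sub_zero, smul_eq_mul]
        field_simp
      have h3 : Tendsto g (nhdsWithin (0:ℂ) {(0:ℂ)}ᶜ) (nhds 0) :=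
        (h2.mono_left nhdsWithin_le_nhds).congr' heq
      have h4 : Tendsto g (nhdsWithin (0:ℂ) {(0:ℂ)}ᶜ) (nhds (g 0)) :=
        (hg.continuousAt.continuousWithinAt (s := {(0:ℂ)}ᶜ)).tendsto
      exact hg0 (tendsto_nhds_unique h4 h3)
    refine ⟨fun s => s ^ (k - (n + 1)) * g s, ((analyticAt_id).pow _).mul hg, ?_⟩
    filter_upwards [hfg] with s hs
    rw [hs, sub_zero, smul_eq_mul, ← mul_assoc, ← pow_add]
    congr 2
    omega

theorem stmt11 (m : ℕ) (hm : 1 ≤ m) (a : ℂ) (ha : a ≠ 0) (z w : ℂ → ℂ)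
    (hz : AnalyticAt ℂ z 0) (hw : AnalyticAt ℂ w 0)
    (hz1 : (fun s : ℂ => z s - s) =o[nhds 0] fun s : ℂ => s)
    (hw1 : (fun s : ℂ => w s - 1 - a * s ^ m) =o[nhds 0] fun s : ℂ => s ^ m) :
    ((fun s : ℂ => (-(deriv w s / w s) * (z s / deriv z s)) - (-(a * m) * s ^ m))
        =o[nhds 0] fun s : ℂ => s ^ m) ∧
      (deriv (fun s : ℂ => -(deriv w s / w s) * (z s / deriv z s)) 0 = 0 ↔ 1 < m) := by
  obtain ⟨k, rfl⟩ : ∃ k, m = k + 1 := ⟨m - 1, by omega⟩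
  have hz0 : z 0 = 0 := by
    have := (hz1.def one_pos).self_of_nhds
    simp only [norm_zero, mul_zero, sub_zero] at this
    rw [← norm_le_zero_iff]
    simpa using this
  have hw0 : w 0 = 1 := by
    have := (hw1.def one_pos).self_of_nhds
    simp only [zero_pow (Nat.succ_ne_zero k), norm_zero, mul_zero, mul_zero, sub_zero] at this
    have h2 : w 0 - 1 = 0 := by
      rw [← norm_le_zero_iff]; simpa using this
    exact sub_eq_zero.mp h2
  have hdz0 : deriv z 0 = 1 := by
    have H : HasDerivAt z 1 0 := by
      rw [hasDerivAt_iff_isLittleO]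
      simpa [hz0] using hz1
    exact H.deriv
  have hAa : AnalyticAt ℂ (fun s : ℂ => z s - s) 0 := hz.sub analyticAt_id
  have hBa : AnalyticAt ℂ (fun s : ℂ => w s - 1 - a * s ^ (k + 1)) 0 :=
    (hw.sub analyticAt_const).sub (analyticAt_const.mul ((analyticAt_id).pow (k+1)))
  obtain ⟨h₁, h₁a, hA⟩ := factor_pow (n := 1) hAa (by simpa using hz1)
  obtain ⟨h₂, h₂a, hB⟩ := factor_pow (n := k + 1) hBa hw1
  -- basic big-O facts
  have h₁O : h₁ =O[nhds 0] (fun _ : ℂ => (1:ℂ)) := h₁a.continuousAt.isBigO_one ℂ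
  have h₂O : h₂ =O[nhds 0] (fun _ : ℂ => (1:ℂ)) := h₂a.continuousAt.isBigO_one ℂ
  have h₁'O : deriv h₁ =O[nhds 0] (fun _ : ℂ => (1:ℂ)) :=
    (analyticAt_deriv' h₁a).continuousAt.isBigO_one ℂ
  have h₂'O : deriv h₂ =O[nhds 0] (fun _ : ℂ => (1:ℂ)) :=
    (analyticAt_deriv' h₂a).continuousAt.isBigO_one ℂ
  have hwO : w =O[nhds 0] (fun _ : ℂ => (1:ℂ)) := hw.continuousAt.isBigO_one ℂ
  have hzO : z =O[nhds 0] fun s : ℂ => s := by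
    have := hz1.isBigO.add (isBigO_refl (fun s : ℂ => s) (nhds 0))
    simpa using this
  have hzs2 : (fun s : ℂ => z s - s) =O[nhds 0] fun s : ℂ => s ^ 2 := by
    refine EventuallyEq.trans_isBigO hA ?_
    simpa using (isBigO_refl (fun s : ℂ => s ^ (1+1)) (nhds 0)).mul h₁O
  have hw1O : (fun s : ℂ => w s - 1) =O[nhds 0] fun s : ℂ => s ^ (k + 1) := by
    have e : (fun s : ℂ => w s - 1) =ᶠ[nhds 0]
        fun s : ℂ => a * s ^ (k+1) + s ^ (k+2) * h₂ s := by
      filter_upwards [hB] with s hs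
      linear_combination hs
    refine e.trans_isBigO (IsBigO.add ?_ ?_)
    · simpa using (isBigO_refl (fun s : ℂ => s ^ (k+1)) (nhds 0)).const_mul_left a
    · have h5 := (isBigO_refl (fun s : ℂ => s ^ (k+2)) (nhds 0)).mul h₂O
      simp only [mul_one] at h5
      exact h5.trans (pow_isBigO_pow_of_le (by omega))
  -- derivative expansions
  have hdzev : ∀ᶠ s in nhds (0:ℂ),
      deriv z s = 1 + (2 * s * h₁ s + s ^ 2 * deriv h₁ s) := by
    have hzev : z =ᶠ[nhds 0] fun s : ℂ => s + s ^ 2 * h₁ s := by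
      filter_upwards [hA] with s hs
      have : z s - s = s ^ (1+1) * h₁ s := hs
      linear_combination this
    filter_upwards [hzev.deriv, h₁a.eventually_analyticAt] with s hs hsa
    rw [hs]
    have H : HasDerivAt (fun t : ℂ => t + t ^ 2 * h₁ t)
        (1 + (((2:ℕ) * s ^ (2-1)) * h₁ s + s ^ 2 * deriv h₁ s)) s :=
      (hasDerivAt_id s).add ((hasDerivAt_pow 2 s).mul hsa.differentiableAt.hasDerivAt)
    rw [H.deriv]
    push_cast
    ring
  have hdwev : ∀ᶠ s in nhds (0:ℂ),
      deriv w s = a * ((k+1) * s ^ k) +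
        (((k+2):ℕ) * s ^ (k+1) * h₂ s + s ^ (k+2) * deriv h₂ s) := by
    have hwev : w =ᶠ[nhds 0] fun s : ℂ => 1 + a * s ^ (k+1) + s ^ (k+2) * h₂ s := by
      filter_upwards [hB] with s hs
      linear_combination hs
    filter_upwards [hwev.deriv, h₂a.eventually_analyticAt] with s hs hsa
    rw [hs]
    have H : HasDerivAt (fun t : ℂ => 1 + a * t ^ (k+1) + t ^ (k+2) * h₂ t)
        ((0 + a * (((k+1):ℕ) * s ^ (k+1-1))) +
          ((((k+2):ℕ) * s ^ (k+2-1)) * h₂ s + s ^ (k+2) * deriv h₂ s)) s :=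
      ((hasDerivAt_const s (1:ℂ)).add ((hasDerivAt_pow (k+1) s).const_mul a)).add
        ((hasDerivAt_pow (k+2) s).mul hsa.differentiableAt.hasDerivAt)
    rw [H.deriv]
    push_cast
    ring_nf
  have hD1 : (fun s : ℂ => deriv z s - 1) =O[nhds 0] fun s : ℂ => s := by
    have e : (fun s : ℂ => deriv z s - 1) =ᶠ[nhds 0]
        fun s : ℂ => 2 * s * h₁ s + s ^ 2 * deriv h₁ s := by
      filter_upwards [hdzev] with s hs
      rw [hs]; ring
    refine e.trans_isBigO (IsBigO.add ?_ ?_)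
    · have h5 := ((isBigO_refl (fun s : ℂ => s) (nhds 0)).mul h₁O).const_mul_left 2
      simp only [mul_one] at h5
      simpa [mul_assoc] using h5
    · have h5 := (isBigO_refl (fun s : ℂ => s ^ 2) (nhds 0)).mul h₁'O
      simp only [mul_one] at h5
      simpa using h5.trans (pow_isBigO_pow_of_le (i := 2) (j := 1) one_le_two)
  have hD2 : (fun s : ℂ => deriv w s - a * ((k:ℂ)+1) * s ^ k) =O[nhds 0]
      fun s : ℂ => s ^ (k+1) := by
    have e : (fun s : ℂ => deriv w s - a * ((k:ℂ)+1) * s ^ k) =ᶠ[nhds 0]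
        fun s : ℂ => ((k:ℂ)+2) * s ^ (k+1) * h₂ s + s ^ (k+2) * deriv h₂ s := by
      filter_upwards [hdwev] with s hs
      rw [hs]; push_cast; ring
    refine e.trans_isBigO (IsBigO.add ?_ ?_)
    · have h5 := ((isBigO_refl (fun s : ℂ => s ^ (k+1)) (nhds 0)).mul h₂O).const_mul_left ((k:ℂ)+2)
      simp only [mul_one] at h5
      simpa [mul_assoc] using h5
    · have h5 := (isBigO_refl (fun s : ℂ => s ^ (k+2)) (nhds 0)).mul h₂'O
      simp only [mul_one] at h5
      exact h5.trans (pow_isBigO_pow_of_le (by omega))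
  set N : ℂ → ℂ := fun s => -(deriv w s) * z s + a * ((k:ℂ)+1) * s^(k+1) * (w s * deriv z s)
    with hNdef
  have hwne : ∀ᶠ s in nhds (0:ℂ), w s ≠ 0 := hw.continuousAt.eventually_ne (by simp [hw0])
  have hzne : ∀ᶠ s in nhds (0:ℂ), deriv z s ≠ 0 :=
    (analyticAt_deriv' hz).continuousAt.eventually_ne (by simp [hdz0])
  have inner : (fun s : ℂ => s * w s * deriv z s - z s) =O[nhds 0] fun s : ℂ => s ^ 2 := by
    have e : (fun s : ℂ => s * w s * deriv z s - z s) =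
        fun s : ℂ => (s * w s) * (deriv z s - 1) + (s * (w s - 1) + (s - z s)) := by
      funext s; ring
    rw [e]
    refine IsBigO.add ?_ (IsBigO.add ?_ ?_)
    · have hsw : (fun s : ℂ => s * w s) =O[nhds 0] fun s : ℂ => s := by
        have h5 := (isBigO_refl (fun s : ℂ => s) (nhds 0)).mul hwO
        simpa using h5
      have h6 := hsw.mul hD1
      simpa [sq] using h6
    · have h5 := (isBigO_refl (fun s : ℂ => s) (nhds 0)).mul hw1O
      have e2 : (fun s : ℂ => s * s^(k+1)) = fun s : ℂ => s^(k+2) := by funext s; ring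
      rw [e2] at h5
      exact h5.trans (pow_isBigO_pow_of_le (by omega))
    · have h5 := hzs2.neg_left
      simpa [neg_sub] using h5
  have hNO : N =O[nhds 0] fun s : ℂ => s ^ (k+2) := by
    have e : N = fun s : ℂ => -((deriv w s - a * ((k:ℂ)+1) * s^k) * z s)
        + a * ((k:ℂ)+1) * (s^k * (s * w s * deriv z s - z s)) := by
      funext s; simp only [hNdef]; ring
    rw [e]
    refine IsBigO.add ?_ ?_
    · have h5 := (hD2.mul hzO).neg_left
      have e2 : (fun s : ℂ => s^(k+1) * s) = fun s : ℂ => s^(k+2) := by funext s; ring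
      rwa [e2] at h5
    · have h5 := ((isBigO_refl (fun s : ℂ => s^k) (nhds 0)).mul inner).const_mul_left
        (a * ((k:ℂ)+1))
      have e2 : (fun s : ℂ => s^k * s^2) = fun s : ℂ => s^(k+2) := by funext s; ring
      rw [e2] at h5
      simpa [mul_assoc] using h5
  have hinvO : (fun s : ℂ => (w s * deriv z s)⁻¹) =O[nhds 0] (fun _ : ℂ => (1:ℂ)) := by
    have ht : Tendsto (fun s : ℂ => w s * deriv z s) (nhds 0) (nhds (w 0 * deriv z 0)) :=
      hw.continuousAt.mul (analyticAt_deriv' hz).continuousAt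
    exact (ht.inv₀ (by simp [hw0, hdz0])).isBigO_one ℂ
  have keyev : (fun s : ℂ => (-(deriv w s / w s) * (z s / deriv z s))
        - (-(a * ((k+1:ℕ):ℂ)) * s ^ (k+1)))
      =ᶠ[nhds 0] fun s => N s * (w s * deriv z s)⁻¹ := by
    filter_upwards [hwne, hzne] with s hws hzs
    rw [hNdef]
    push_cast
    field_simp
    ring
  have main : (fun s : ℂ => (-(deriv w s / w s) * (z s / deriv z s))
        - (-(a * ((k+1:ℕ):ℂ)) * s ^ (k+1)))
      =o[nhds 0] fun s : ℂ => s ^ (k+1) := by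
    refine keyev.trans_isLittleO ?_
    have h5 := hNO.mul hinvO
    simp only [mul_one] at h5
    exact h5.trans_isLittleO (pow_succ_isLittleO_pow (k+1))
  refine ⟨main, ?_⟩
  set g : ℂ → ℂ := fun s : ℂ => -(deriv w s / w s) * (z s / deriv z s) with hgdef
  have hg0 : g 0 = 0 := by simp [hgdef, hz0]
  have gdiff : DifferentiableAt ℂ g 0 :=
    (((analyticAt_deriv' hw).differentiableAt.div hw.differentiableAt (by simp [hw0])).neg).mul
      (hz.differentiableAt.div (analyticAt_deriv' hz).differentiableAt (by simp [hdz0]))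
  have limit1 : Tendsto (fun s : ℂ => g s / s) (nhdsWithin 0 {(0:ℂ)}ᶜ) (nhds (deriv g 0)) := by
    have hsl := hasDerivAt_iff_tendsto_slope.mp gdiff.hasDerivAt
    refine hsl.congr' ?_
    filter_upwards [self_mem_nhdsWithin] with s hs0
    simp [slope_def_field, hg0]
  have hdiv : Tendsto (fun s : ℂ => (g s - (-(a * ((k+1:ℕ):ℂ)) * s^(k+1))) / s^(k+1))
      (nhds 0) (nhds 0) := main.tendsto_div_nhds_zero
  have limit2 : Tendsto (fun s : ℂ => g s / s) (nhdsWithin 0 {(0:ℂ)}ᶜ)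
      (nhds (0 * 0^k + -(a * ((k+1:ℕ):ℂ)) * 0^k)) := by
    have expr : Tendsto (fun s : ℂ => (g s - (-(a * ((k+1:ℕ):ℂ)) * s^(k+1))) / s^(k+1) * s^k
        + -(a * ((k+1:ℕ):ℂ)) * s^k) (nhds 0)
        (nhds (0 * 0^k + -(a * ((k+1:ℕ):ℂ)) * 0^k)) :=
      (hdiv.mul ((continuous_pow k).tendsto 0)).add
        (((continuous_pow k).tendsto 0).const_mul _)
    refine (expr.mono_left nhdsWithin_le_nhds).congr' ?_
    filter_upwards [self_mem_nhdsWithin] with s hs0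
    simp only [Set.mem_compl_iff, Set.mem_singleton_iff] at hs0
    field_simp
    ring
  have hder : deriv g 0 = 0 * 0^k + -(a * ((k+1:ℕ):ℂ)) * 0^k :=
    tendsto_nhds_unique limit1 limit2
  rcases Nat.eq_zero_or_pos k with hk0 | hk1
  · subst hk0
    rw [hder]
    simp [ha]
  · rw [hder]
    have hzp : (0:ℂ)^k = 0 := zero_pow (by omega)
    simp [hzp]
    omega
end

section
/- Let a, b, c, d ∈ ℂ and let f̃(z,w,t) = c·t + z·(w(w+b) + dzw + az²) ∈ ℂ[z,w,t]. Then: (i) the polynomial Ñ does not involve the variable t, i.e. Ñ ∈ ℂ[z,w]; (ii) Ñ is divisible by z², say Ñ = z²·M with M ∈ ℂ[z,w]; (iii) every monomial z^{j₁}w^{j₂} of M satisfies that (j₁, j₂) lies in the convex hull of (2,0), (5,0), (1,4), (0,4), (0,1); and (iv) the coefficient of w in M equals b³ and the coefficient of z² in M equals −3ab², so the truncation of M to the edge joining (2,0) and (0,1) is b³·w − 3ab²·z². -/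
open MvPolynomial

noncomputable def term (i j : ℕ) (k : ℂ) : MvPolynomial (Fin 3) ℂ :=
  monomial (Finsupp.single 0 i + Finsupp.single 1 j) k

lemma term_eq (i j : ℕ) (k : ℂ) : term i j k = C k * X 0 ^ i * X 1 ^ j := by
  rw [term, X_pow_eq_monomial, X_pow_eq_monomial, mul_assoc, monomial_mul, C_mul_monomial]
  ring_nf

lemma supp_add {P : (Fin 3 →₀ ℕ) → Prop} {p q : MvPolynomial (Fin 3) ℂ}
    (hp : ∀ m ∈ p.support, P m) (hq : ∀ m ∈ q.support, P m) :
    ∀ m ∈ (p + q).support, P m := by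
  intro m hm
  rcases Finset.mem_union.mp (MvPolynomial.support_add hm) with h | h
  exacts [hp m h, hq m h]

lemma supp_term {P : (Fin 3 →₀ ℕ) → Prop} {i j : ℕ} {k : ℂ}
    (h : P (Finsupp.single 0 i + Finsupp.single 1 j)) :
    ∀ m ∈ (term i j k).support, P m := by
  intro m hm
  rw [term] at hm
  rw [Finset.mem_singleton.mp (support_monomial_subset hm)]; exact h

lemma coeff_term (i j i' j' : ℕ) (k : ℂ) :
    (term i j k).coeff (Finsupp.single 0 i' + Finsupp.single 1 j') =
      if i = i' ∧ j = j' then k else 0 := by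
  rw [term, coeff_monomial]
  by_cases h : i = i' ∧ j = j'
  · obtain ⟨rfl, rfl⟩ := h; simp
  · rw [if_neg, if_neg h]
    intro he
    exact h ⟨by simpa [Finsupp.single_apply] using DFunLike.congr_fun he 0,
      by simpa [Finsupp.single_apply] using DFunLike.congr_fun he 1⟩

lemma mem_hull3 {s : Set (Fin 2 → ℝ)} {x y z : Fin 2 → ℝ}
    (hx : x ∈ s) (hy : y ∈ s) (hz : z ∈ s) (α β γ : ℝ)
    (hα : 0 ≤ α) (hβ : 0 ≤ β) (hγ : 0 ≤ γ) (h1 : α + β + γ = 1)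
    {p : Fin 2 → ℝ} (hp : p = α • x + β • y + γ • z) :
    p ∈ convexHull ℝ s := by
  subst hp
  have h := (convex_convexHull ℝ s).sum_mem (t := (Finset.univ : Finset (Fin 3)))
    (w := ![α, β, γ]) (z := ![x, y, z])
    (fun i _ => by fin_cases i <;> assumption)
    (by simp [Fin.sum_univ_three, h1])
    (fun i _ => by fin_cases i <;> exact subset_convexHull ℝ s ‹_›)
  simpa [Fin.sum_univ_three, add_assoc] using h

noncomputable def Mpoly (a b d : ℂ) : MvPolynomial (Fin 3) ℂ :=
  term 0 1 (b^3) + term 0 2 (3*b^2) + term 0 3 (4*b - b^2) + term 0 4 (2 - b) +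
  term 1 1 (4*b^2*d) + term 1 2 (4*b*d - b^2*d) + term 1 3 (-10*b*d) + term 1 4 (-9*d) +
  term 2 0 (-3*a*b^2) + term 2 1 (7*b*d^2 - 9*a*b^2 - 24*a*b) +
  term 2 2 (3*d^2 - 42*a*b - 24*a - b*d^2) + term 2 3 (-36*a - 9*d^2) +
  term 3 1 (-18*a*b*d + 4*d^3 - 24*a*d) + term 3 2 (-54*a*d) +
  term 4 0 (3*a*d^2 - 9*a^2*b - 18*a^2) + term 4 1 (-9*a*d^2 - 36*a^2) +
  term 5 0 (-9*a^2*d)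

set_option maxHeartbeats 1000000 in
lemma key_s13 (a b c d : ℂ) :
    Ntilde (C c * X 2 + X 0 * (X 1 * (X 1 + C b) + C d * X 0 * X 1 + C a * X 0 ^ 2)) =
      X 0 ^ 2 * Mpoly a b d := by
  have c2 : ((2:MvPolynomial (Fin 3) ℂ)) = C 2 := (map_ofNat C 2).symm
  have p2 : ∀ i : Fin 3, pderiv i (2 : MvPolynomial (Fin 3) ℂ) = 0 := fun i => by
    rw [c2, pderiv_C]
  have p3 : ∀ i : Fin 3, pderiv i (3 : MvPolynomial (Fin 3) ℂ) = 0 := fun i => by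
    rw [(map_ofNat C 3).symm, pderiv_C]
  have e01 : (pderiv 0 (X 1) : MvPolynomial (Fin 3) ℂ) = 0 := pderiv_X_of_ne (by decide)
  have e10 : (pderiv 1 (X 0) : MvPolynomial (Fin 3) ℂ) = 0 := pderiv_X_of_ne (by decide)
  have e02 : (pderiv 0 (X 2) : MvPolynomial (Fin 3) ℂ) = 0 := pderiv_X_of_ne (by decide)
  have e12 : (pderiv 1 (X 2) : MvPolynomial (Fin 3) ℂ) = 0 := pderiv_X_of_ne (by decide)
  have h0 : pderiv 0 (C c * X 2 + X 0 * (X 1 * (X 1 + C b) + C d * X 0 * X 1 + C a * X 0 ^ 2)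
      : MvPolynomial (Fin 3) ℂ)
      = X 1^2 + C b * X 1 + C (2*d)*X 0*X 1 + C (3*a)*X 0^2 := by
    simp only [map_add, pderiv_mul, pderiv_C, pderiv_X_self, e01, e02, e10, e12, p2, p3,
      Derivation.leibniz_pow, nsmul_eq_mul, smul_eq_mul, map_mul, map_ofNat]
    push_cast
    ring
  have h1 : pderiv 1 (C c * X 2 + X 0 * (X 1 * (X 1 + C b) + C d * X 0 * X 1 + C a * X 0 ^ 2)
      : MvPolynomial (Fin 3) ℂ)
      = C (2:ℂ)*X 0*X 1 + C b*X 0 + C d*X 0^2 := by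
    simp only [map_add, pderiv_mul, pderiv_C, pderiv_X_self, e01, e02, e10, e12, p2, p3,
      Derivation.leibniz_pow, nsmul_eq_mul, smul_eq_mul, map_mul, map_ofNat]
    push_cast
    ring
  have hA1 : pderiv 1 ((X 0 : MvPolynomial (Fin 3) ℂ)
        * (X 1^2 + C b * X 1 + C (2*d)*X 0*X 1 + C (3*a)*X 0^2))
      = C (2:ℂ)*X 0*X 1 + C b*X 0 + C (2*d)*X 0^2 := by
    simp only [map_add, pderiv_mul, pderiv_C, pderiv_X_self, e01, e02, e10, e12, p2, p3,
      Derivation.leibniz_pow, nsmul_eq_mul, smul_eq_mul, map_mul, map_ofNat]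
    push_cast
    ring
  have hA0 : pderiv 0 ((X 0 : MvPolynomial (Fin 3) ℂ)
        * (X 1^2 + C b * X 1 + C (2*d)*X 0*X 1 + C (3*a)*X 0^2))
      = X 1^2 + C b*X 1 + C (4*d)*X 0*X 1 + C (9*a)*X 0^2 := by
    simp only [map_add, pderiv_mul, pderiv_C, pderiv_X_self, e01, e02, e10, e12, p2, p3,
      Derivation.leibniz_pow, nsmul_eq_mul, smul_eq_mul, map_mul, map_ofNat]
    push_cast
    ring
  have hB1 : pderiv 1 (((X 1 : MvPolynomial (Fin 3) ℂ) + 1)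
        * (C (2:ℂ)*X 0*X 1 + C b*X 0 + C d*X 0^2))
      = (C (2:ℂ)*X 0*X 1 + C b*X 0 + C d*X 0^2) + (X 1+1)*(C (2:ℂ)*X 0) := by
    simp only [map_add, pderiv_mul, pderiv_C, pderiv_X_self, pderiv_one, e01, e02, e10, e12,
      p2, p3, Derivation.leibniz_pow, nsmul_eq_mul, smul_eq_mul, map_mul, map_ofNat]
    push_cast
    ring
  have hB0 : pderiv 0 (((X 1 : MvPolynomial (Fin 3) ℂ) + 1)
        * (C (2:ℂ)*X 0*X 1 + C b*X 0 + C d*X 0^2))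
      = (X 1+1)*(C (2:ℂ)*X 1 + C b + C (2*d)*X 0) := by
    simp only [map_add, pderiv_mul, pderiv_C, pderiv_X_self, pderiv_one, e01, e02, e10, e12,
      p2, p3, Derivation.leibniz_pow, nsmul_eq_mul, smul_eq_mul, map_mul, map_ofNat]
    push_cast
    ring
  rw [Ntilde, h0, h1, hA1, hA0, hB1, hB0, Mpoly]
  simp only [term_eq, map_mul, map_add, map_sub, map_neg, map_pow, map_ofNat, map_one]
  ring

set_option maxHeartbeats 1000000 in
theorem stmt13 (a b c d : ℂ) :
    let f : MvPolynomial (Fin 3) ℂ :=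
      C c * X 2 + X 0 * (X 1 * (X 1 + C b) + C d * X 0 * X 1 + C a * X 0 ^ 2)
    (∀ mo ∈ (Ntilde f).support, mo 2 = 0) ∧
      ∃ M : MvPolynomial (Fin 3) ℂ,
        Ntilde f = X 0 ^ 2 * M ∧
        (∀ mo ∈ M.support, mo 2 = 0) ∧
        (∀ mo ∈ M.support,
          (![(mo 0 : ℝ), (mo 1 : ℝ)] : Fin 2 → ℝ) ∈
            convexHull ℝ
              ({![2, 0], ![5, 0], ![1, 4], ![0, 4], ![0, 1]} : Set (Fin 2 → ℝ))) ∧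
        M.coeff (Finsupp.single 1 1) = b ^ 3 ∧
        M.coeff (Finsupp.single 0 2) = -3 * a * b ^ 2 := by
  intro f
  have hk : Ntilde f = X 0 ^ 2 * Mpoly a b d := key_s13 a b c d
  have hE : ![(0:ℝ),1] ∈ ({![2,0],![5,0],![1,4],![0,4],![0,1]} : Set (Fin 2 → ℝ)) := by
    norm_num [Set.mem_insert_iff, Set.mem_singleton_iff]
  have hA : ![(2:ℝ),0] ∈ ({![2,0],![5,0],![1,4],![0,4],![0,1]} : Set (Fin 2 → ℝ)) := by
    norm_num [Set.mem_insert_iff, Set.mem_singleton_iff]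
  have hB : ![(5:ℝ),0] ∈ ({![2,0],![5,0],![1,4],![0,4],![0,1]} : Set (Fin 2 → ℝ)) := by
    norm_num [Set.mem_insert_iff, Set.mem_singleton_iff]
  have hC : ![(1:ℝ),4] ∈ ({![2,0],![5,0],![1,4],![0,4],![0,1]} : Set (Fin 2 → ℝ)) := by
    norm_num [Set.mem_insert_iff, Set.mem_singleton_iff]
  have hD : ![(0:ℝ),4] ∈ ({![2,0],![5,0],![1,4],![0,4],![0,1]} : Set (Fin 2 → ℝ)) := by
    norm_num [Set.mem_insert_iff, Set.mem_singleton_iff]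
  have hM : ∀ mo ∈ (Mpoly a b d).support, mo 2 = 0 ∧
      (![(mo 0 : ℝ), (mo 1 : ℝ)] : Fin 2 → ℝ) ∈
        convexHull ℝ ({![2,0],![5,0],![1,4],![0,4],![0,1]} : Set (Fin 2 → ℝ)) := by
    rw [Mpoly]
    repeat' first | apply supp_add | apply supp_term
    -- 17 goals, one per term, in order
    · refine ⟨by simp [Finsupp.single_apply], ?_⟩
      norm_num [Finsupp.single_apply]
      exact mem_hull3 hE hE hE 1 0 0 (by norm_num) le_rfl le_rfl (by norm_num)
        (by funext i; fin_cases i <;> norm_num)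
    · refine ⟨by simp [Finsupp.single_apply], ?_⟩
      norm_num [Finsupp.single_apply]
      exact mem_hull3 hE hD hD (2/3) (1/3) 0 (by norm_num) (by norm_num) le_rfl (by norm_num)
        (by funext i; fin_cases i <;> norm_num)
    · refine ⟨by simp [Finsupp.single_apply], ?_⟩
      norm_num [Finsupp.single_apply]
      exact mem_hull3 hE hD hD (1/3) (2/3) 0 (by norm_num) (by norm_num) le_rfl (by norm_num)
        (by funext i; fin_cases i <;> norm_num)
    · refine ⟨by simp [Finsupp.single_apply], ?_⟩
      norm_num [Finsupp.single_apply]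
      exact mem_hull3 hD hD hD 1 0 0 (by norm_num) le_rfl le_rfl (by norm_num)
        (by funext i; fin_cases i <;> norm_num)
    · refine ⟨by simp [Finsupp.single_apply], ?_⟩
      norm_num [Finsupp.single_apply]
      exact mem_hull3 hE hA hC (3/7) (3/7) (1/7) (by norm_num) (by norm_num) (by norm_num)
        (by norm_num) (by funext i; fin_cases i <;> norm_num)
    · refine ⟨by simp [Finsupp.single_apply], ?_⟩
      norm_num [Finsupp.single_apply]
      exact mem_hull3 hE hA hC (2/7) (2/7) (3/7) (by norm_num) (by norm_num) (by norm_num)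
        (by norm_num) (by funext i; fin_cases i <;> norm_num)
    · refine ⟨by simp [Finsupp.single_apply], ?_⟩
      norm_num [Finsupp.single_apply]
      exact mem_hull3 hE hA hC (1/7) (1/7) (5/7) (by norm_num) (by norm_num) (by norm_num)
        (by norm_num) (by funext i; fin_cases i <;> norm_num)
    · refine ⟨by simp [Finsupp.single_apply], ?_⟩
      norm_num [Finsupp.single_apply]
      exact mem_hull3 hC hC hC 1 0 0 (by norm_num) le_rfl le_rfl (by norm_num)
        (by funext i; fin_cases i <;> norm_num)
    · refine ⟨by simp [Finsupp.single_apply], ?_⟩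
      norm_num [Finsupp.single_apply]
      exact mem_hull3 hA hA hA 1 0 0 (by norm_num) le_rfl le_rfl (by norm_num)
        (by funext i; fin_cases i <;> norm_num)
    · refine ⟨by simp [Finsupp.single_apply], ?_⟩
      norm_num [Finsupp.single_apply]
      exact mem_hull3 hA hB hC (2/3) (1/12) (1/4) (by norm_num) (by norm_num) (by norm_num)
        (by norm_num) (by funext i; fin_cases i <;> norm_num)
    · refine ⟨by simp [Finsupp.single_apply], ?_⟩
      norm_num [Finsupp.single_apply]
      exact mem_hull3 hA hB hC (1/3) (1/6) (1/2) (by norm_num) (by norm_num) (by norm_num)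
        (by norm_num) (by funext i; fin_cases i <;> norm_num)
    · refine ⟨by simp [Finsupp.single_apply], ?_⟩
      norm_num [Finsupp.single_apply]
      exact mem_hull3 hA hB hC 0 (1/4) (3/4) le_rfl (by norm_num) (by norm_num)
        (by norm_num) (by funext i; fin_cases i <;> norm_num)
    · refine ⟨by simp [Finsupp.single_apply], ?_⟩
      norm_num [Finsupp.single_apply]
      exact mem_hull3 hA hB hC (1/3) (5/12) (1/4) (by norm_num) (by norm_num) (by norm_num)
        (by norm_num) (by funext i; fin_cases i <;> norm_num)
    · refine ⟨by simp [Finsupp.single_apply], ?_⟩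
      norm_num [Finsupp.single_apply]
      exact mem_hull3 hB hC hC (1/2) (1/2) 0 (by norm_num) (by norm_num) le_rfl
        (by norm_num) (by funext i; fin_cases i <;> norm_num)
    · refine ⟨by simp [Finsupp.single_apply], ?_⟩
      norm_num [Finsupp.single_apply]
      exact mem_hull3 hA hB hB (1/3) (2/3) 0 (by norm_num) (by norm_num) le_rfl
        (by norm_num) (by funext i; fin_cases i <;> norm_num)
    · refine ⟨by simp [Finsupp.single_apply], ?_⟩
      norm_num [Finsupp.single_apply]
      exact mem_hull3 hB hC hC (3/4) (1/4) 0 (by norm_num) (by norm_num) le_rfl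
        (by norm_num) (by funext i; fin_cases i <;> norm_num)
    · refine ⟨by simp [Finsupp.single_apply], ?_⟩
      norm_num [Finsupp.single_apply]
      exact mem_hull3 hB hB hB 1 0 0 (by norm_num) le_rfl le_rfl (by norm_num)
        (by funext i; fin_cases i <;> norm_num)
  refine ⟨?_, Mpoly a b d, hk, fun mo h => (hM mo h).1, fun mo h => (hM mo h).2, ?_, ?_⟩
  · intro mo hmo
    rw [hk] at hmo
    have h2 := support_mul (X 0 ^ 2 : MvPolynomial (Fin 3) ℂ) (Mpoly a b d) hmo
    rw [support_X_pow] at h2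
    obtain ⟨u, hu, v, hv, huv⟩ := Finset.mem_add.mp h2
    rw [Finset.mem_singleton] at hu
    subst hu
    rw [← huv]
    simp [Finsupp.single_apply, (hM v hv).1]
  · have h11 : (Finsupp.single 1 1 : Fin 3 →₀ ℕ) =
        Finsupp.single 0 0 + Finsupp.single 1 1 := by simp
    rw [Mpoly, h11]
    simp only [coeff_add, coeff_term]
    norm_num
  · have h02 : (Finsupp.single 0 2 : Fin 3 →₀ ℕ) =
        Finsupp.single 0 2 + Finsupp.single 1 0 := by simp
    rw [Mpoly, h02]
    simp only [coeff_add, coeff_term]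
    norm_num
end

section
/- Let a, b, c, d ∈ ℂ with b ≠ 0, and let f̃(z,w,t) = c·t + z·(w(w+b) + dzw + az²) ∈ ℂ[z,w,t]. Let z, w, t be analytic functions on a neighborhood of 0 ∈ ℂ with z(s) = α·s + o(s), w(s) = β·s² + o(s²), and t(s) = s³ + o(s³) for some α, β ∈ ℂ∖{0}, such that f̃(z(s), w(s), t(s)) = 0 and Ñ(z(s), w(s), t(s)) = 0 identically near 0. Then the leading coefficients satisfy the two equations b³·β = 3ab²·α² and a·α³ + b·α·β + c = 0; in particular β = 3aα²/b. -/
open MvPolynomial Asymptotics Filter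

private lemma pderiv_two (i : Fin 3) : pderiv i (2 : MvPolynomial (Fin 3) ℂ) = 0 := by
  rw [show (2 : MvPolynomial (Fin 3) ℂ) = 1 + 1 by norm_num]
  simp

/-- Rescaled version of `Ñ` evaluated along `z = Z s`, `w = W s²`: we have
`Ñ(Zs, Ws², Ts³) = s⁴ · Hn a b d Z W s`. -/
@[irreducible] noncomputable def Hn (a b d Z W s : ℂ) : ℂ :=
  (W*(W*s^2+b) + 2*d*Z*W*s + 3*a*Z^2) *
      ((Z*(2*W*s^2+b+2*d*Z*s)) * ((W*s^2+1)*(Z*(2*W*s^2+b+d*Z*s))) -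
        s^2*(Z*(W*(W*s^2+b)+2*d*Z*W*s+3*a*Z^2) *
          ((Z*(2*W*s^2+b+d*Z*s)) + (W*s^2+1)*(2*Z)))) -
    (Z*(2*W*s^2+b+d*Z*s)) *
      (((W*(W*s^2+b)+2*d*Z*W*s+3*a*Z^2) + Z*(2*d*W*s+6*a*Z)) *
          ((W*s^2+1)*(Z*(2*W*s^2+b+d*Z*s))) -
        Z*(W*(W*s^2+b)+2*d*Z*W*s+3*a*Z^2)*((W*s^2+1)*(2*W*s^2+b+2*d*Z*s)))

/-- Rescaled version of `f̃` evaluated along `z = Z s`, `w = W s²`, `t = T s³`: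
`f̃(Zs, Ws², Ts³) = s³ · Hf a b c d Z W T s`. -/
@[irreducible] noncomputable def Hf (a b c d Z W T s : ℂ) : ℂ :=
  c*T + Z*(W*(W*s^2+b) + d*Z*W*s + a*Z^2)

private lemma eval_f_scaled (a b c d Z W T s : ℂ) :
    eval ![Z*s, W*s^2, T*s^3]
        (C c * X 2 + X 0 * (X 1 * (X 1 + C b) + C d * X 0 * X 1 + C a * X 0 ^ 2)) =
      s^3 * Hf a b c d Z W T s := by
  simp [Hf]
  ring

private lemma eval_N_scaled (a b c d Z W T s : ℂ) :
    eval ![Z*s, W*s^2, T*s^3]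
        (Ntilde (C c * X 2 + X 0 * (X 1 * (X 1 + C b) + C d * X 0 * X 1 + C a * X 0 ^ 2))) =
      s^4 * Hn a b d Z W s := by
  simp [Ntilde, Hn, pderiv_mul, pderiv_X_self, pderiv_X_of_ne, pderiv_two]
  ring

private lemma cont_Hn (a b d : ℂ) :
    Continuous fun p : ℂ × ℂ × ℂ => Hn a b d p.1 p.2.1 p.2.2 := by
  unfold Hn; fun_prop

private lemma cont_Hf (a b c d : ℂ) :
    Continuous fun p : ℂ × ℂ × ℂ × ℂ => Hf a b c d p.1 p.2.1 p.2.2.1 p.2.2.2 := by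
  unfold Hf; fun_prop

set_option maxHeartbeats 2000000 in
theorem stmt14 (a b c d : ℂ) (hb : b ≠ 0)
    (z w t : ℂ → ℂ) (α β : ℂ) (hα : α ≠ 0) (hβ : β ≠ 0)
    (hz : AnalyticAt ℂ z 0) (hw : AnalyticAt ℂ w 0) (ht : AnalyticAt ℂ t 0)
    (hz1 : (fun s : ℂ => z s - α * s) =o[nhds 0] fun s : ℂ => s)
    (hw1 : (fun s : ℂ => w s - β * s ^ 2) =o[nhds 0] fun s : ℂ => s ^ 2)
    (ht1 : (fun s : ℂ => t s - s ^ 3) =o[nhds 0] fun s : ℂ => s ^ 3)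
    (hzero : ∀ᶠ s in nhds (0 : ℂ),
      eval ![z s, w s, t s]
          (C c * X 2 + X 0 * (X 1 * (X 1 + C b) + C d * X 0 * X 1 + C a * X 0 ^ 2)) = 0 ∧
        eval ![z s, w s, t s]
          (Ntilde (C c * X 2 + X 0 * (X 1 * (X 1 + C b) + C d * X 0 * X 1 + C a * X 0 ^ 2)))
          = 0) :
    b ^ 3 * β = 3 * a * b ^ 2 * α ^ 2 ∧
      a * α ^ 3 + b * α * β + c = 0 ∧
      β = 3 * a * α ^ 2 / b := by
  -- limits of the rescaled coordinates on the punctured neighborhood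
  have hsne : ∀ᶠ s in nhdsWithin (0 : ℂ) {(0 : ℂ)}ᶜ, s ≠ (0 : ℂ) :=
    eventually_mem_nhdsWithin
  have hZ : Tendsto (fun s : ℂ => z s / s) (nhdsWithin 0 {(0 : ℂ)}ᶜ) (nhds α) := by
    have h0 : Tendsto (fun s : ℂ => (z s - α * s) / s + α)
        (nhdsWithin 0 {(0 : ℂ)}ᶜ) (nhds (0 + α)) :=
      ((hz1.tendsto_div_nhds_zero).mono_left nhdsWithin_le_nhds).add tendsto_const_nhds
    rw [zero_add] at h0
    refine h0.congr' (hsne.mono fun s hs => ?_)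
    field_simp
    ring
  have hW : Tendsto (fun s : ℂ => w s / s ^ 2) (nhdsWithin 0 {(0 : ℂ)}ᶜ) (nhds β) := by
    have h0 : Tendsto (fun s : ℂ => (w s - β * s ^ 2) / s ^ 2 + β)
        (nhdsWithin 0 {(0 : ℂ)}ᶜ) (nhds (0 + β)) :=
      ((hw1.tendsto_div_nhds_zero).mono_left nhdsWithin_le_nhds).add tendsto_const_nhds
    rw [zero_add] at h0
    refine h0.congr' (hsne.mono fun s hs => ?_)
    field_simp
    ring
  have hT : Tendsto (fun s : ℂ => t s / s ^ 3) (nhdsWithin 0 {(0 : ℂ)}ᶜ) (nhds 1) := by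
    have h0 : Tendsto (fun s : ℂ => (t s - s ^ 3) / s ^ 3 + 1)
        (nhdsWithin 0 {(0 : ℂ)}ᶜ) (nhds (0 + 1)) :=
      ((ht1.tendsto_div_nhds_zero).mono_left nhdsWithin_le_nhds).add tendsto_const_nhds
    rw [zero_add] at h0
    refine h0.congr' (hsne.mono fun s hs => ?_)
    field_simp
    ring
  have hS : Tendsto (fun s : ℂ => s) (nhdsWithin 0 {(0 : ℂ)}ᶜ) (nhds 0) :=
    tendsto_id.mono_left nhdsWithin_le_nhds
  have hzero' := hzero.filter_mono (nhdsWithin_le_nhds (s := {(0 : ℂ)}ᶜ))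
  -- the rescaled functions vanish on the punctured neighborhood
  have hNzero : ∀ᶠ s in nhdsWithin (0 : ℂ) {(0 : ℂ)}ᶜ,
      Hn a b d (z s / s) (w s / s ^ 2) s = 0 := by
    filter_upwards [hzero', hsne] with s hs hsne0
    have hzs : z s / s * s = z s := div_mul_cancel₀ _ hsne0
    have hws : w s / s ^ 2 * s ^ 2 = w s := div_mul_cancel₀ _ (pow_ne_zero 2 hsne0)
    have hts : t s / s ^ 3 * s ^ 3 = t s := div_mul_cancel₀ _ (pow_ne_zero 3 hsne0)
    have key := eval_N_scaled a b c d (z s / s) (w s / s ^ 2) (t s / s ^ 3) s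
    rw [hzs, hws, hts, hs.2] at key
    have hs4 : (s : ℂ) ^ 4 ≠ 0 := pow_ne_zero 4 hsne0
    field_simp at key
    exact (mul_eq_zero.mp key.symm).resolve_left hs4
  have hFzero : ∀ᶠ s in nhdsWithin (0 : ℂ) {(0 : ℂ)}ᶜ,
      Hf a b c d (z s / s) (w s / s ^ 2) (t s / s ^ 3) s = 0 := by
    filter_upwards [hzero', hsne] with s hs hsne0
    have hzs : z s / s * s = z s := div_mul_cancel₀ _ hsne0
    have hws : w s / s ^ 2 * s ^ 2 = w s := div_mul_cancel₀ _ (pow_ne_zero 2 hsne0)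
    have hts : t s / s ^ 3 * s ^ 3 = t s := div_mul_cancel₀ _ (pow_ne_zero 3 hsne0)
    have key := eval_f_scaled a b c d (z s / s) (w s / s ^ 2) (t s / s ^ 3) s
    rw [hzs, hws, hts, hs.1] at key
    have hs3 : (s : ℂ) ^ 3 ≠ 0 := pow_ne_zero 3 hsne0
    field_simp at key
    exact (mul_eq_zero.mp key.symm).resolve_left hs3
  -- limits of the rescaled functions
  have hNlim : Tendsto (fun s : ℂ => Hn a b d (z s / s) (w s / s ^ 2) s)
      (nhdsWithin 0 {(0 : ℂ)}ᶜ) (nhds (Hn a b d α β 0)) := by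
    have hp : Tendsto (fun s : ℂ => (z s / s, w s / s ^ 2, s))
        (nhdsWithin 0 {(0 : ℂ)}ᶜ) (nhds (α, β, 0)) := by
      rw [nhds_prod_eq, nhds_prod_eq]
      exact hZ.prodMk (hW.prodMk hS)
    exact ((cont_Hn a b d).tendsto (α, β, 0)).comp hp
  have hFlim : Tendsto (fun s : ℂ => Hf a b c d (z s / s) (w s / s ^ 2) (t s / s ^ 3) s)
      (nhdsWithin 0 {(0 : ℂ)}ᶜ) (nhds (Hf a b c d α β 1 0)) := by
    have hp : Tendsto (fun s : ℂ => (z s / s, w s / s ^ 2, t s / s ^ 3, s))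
        (nhdsWithin 0 {(0 : ℂ)}ᶜ) (nhds (α, β, 1, 0)) := by
      rw [nhds_prod_eq, nhds_prod_eq, nhds_prod_eq]
      exact hZ.prodMk (hW.prodMk (hT.prodMk hS))
    exact ((cont_Hf a b c d).tendsto (α, β, 1, 0)).comp hp
  -- uniqueness of limits
  have hNval : Hn a b d α β 0 = 0 :=
    tendsto_nhds_unique hNlim (tendsto_const_nhds.congr' (hNzero.mono fun s hs => hs.symm))
  have hFval : Hf a b c d α β 1 0 = 0 :=
    tendsto_nhds_unique hFlim (tendsto_const_nhds.congr' (hFzero.mono fun s hs => hs.symm))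
  unfold Hn at hNval
  unfold Hf at hFval
  have hfac : α ^ 2 * b ^ 2 * (b * β - 3 * a * α ^ 2) = 0 := by
    linear_combination hNval
  have h2 : b * β - 3 * a * α ^ 2 = 0 := by
    rcases mul_eq_zero.mp hfac with h | h
    · exact absurd h (mul_ne_zero (pow_ne_zero 2 hα) (pow_ne_zero 2 hb))
    · exact h
  refine ⟨by linear_combination b ^ 2 * h2, by linear_combination hFval, ?_⟩
  field_simp
  linear_combination h2
end
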